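/- arXiv:2303.12608 — 3 statements merged into one kernel-verified Lean document; each statement's English description precedes it below -/
import Mathlib

section
/- (Laplace expansion) Let M be an n×n (q̂,p̂)-Manin matrix over R. Let I and K be increasing multi-indices contained in {1,…,n} of sizes r and n−r respectively. Then ε(p̂, I⊕K) · cdet_{q̂}(M) = ∑_J ε(q̂, J⊕J^c) · cdet_{q̂}(M_{JI}) · cdet_{q̂}(M_{J^c,K}), where the sum is over all increasing multi-indices J ⊆ {1,…,n} of size r and J^c is the increasing complement of J in {1,…,n}. -/
open scoped BigOperators Classical

noncomputable section

/-- `ε(q̂, I, σ)`: the `q̂`-inversion sign associated to the multi-index `I` and `σ ∈ S_r`,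
`ε(q̂,I,σ) = ∏_{s<t, σ(s)>σ(t)} (-q_{i_{σ(s)} i_{σ(t)}})`. -/
def manEps {n r : ℕ} (q : Matrix (Fin n) (Fin n) ℂ) (I : Fin r → Fin n)
    (σ : Equiv.Perm (Fin r)) : ℂ :=
  ∏ st ∈ Finset.univ.filter (fun st : Fin r × Fin r => st.1 < st.2 ∧ σ st.2 < σ st.1),
    (-q (I (σ st.1)) (I (σ st.2)))

/-- `ε(q̂, I)` for a multi-index `I`: `0` if two entries coincide, and
`∏_{s<t, i_s>i_t}(-q_{i_s i_t})` otherwise. -/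
def manEpsIdx {n r : ℕ} (q : Matrix (Fin n) (Fin n) ℂ) (I : Fin r → Fin n) : ℂ :=
  if Function.Injective I then
    ∏ st ∈ Finset.univ.filter (fun st : Fin r × Fin r => st.1 < st.2 ∧ I st.2 < I st.1),
      (-q (I st.1) (I st.2))
  else 0

/-- The column `q̂`-minor determinant
`cdet_{q̂}(M_{IJ}) = ∑_{σ∈S_r} ε(q̂,I,σ) M_{i_{σ(1)},j_1} ⋯ M_{i_{σ(r)},j_r}`. -/
def cdet {R : Type*} [Ring R] [Algebra ℂ R] {n m r : ℕ} (q : Matrix (Fin n) (Fin n) ℂ)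
    (M : Matrix (Fin n) (Fin m) R) (I : Fin r → Fin n) (J : Fin r → Fin m) : R :=
  ∑ σ : Equiv.Perm (Fin r),
    manEps q I σ • (List.ofFn fun a : Fin r => M (I (σ a)) (J a)).prod

/-- A parametric matrix: nonzero entries with `q_{ij} q_{ji} = 1` and `q_{ii} = 1`. -/
def IsParametric {n : ℕ} (q : Matrix (Fin n) (Fin n) ℂ) : Prop :=
  (∀ i j, q i j ≠ 0) ∧ (∀ i j, q i j * q j i = 1) ∧ ∀ i, q i i = 1

/-- An `n×m` `(q̂, p̂)`-Manin matrix over `R`. -/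
def IsManin {R : Type*} [Ring R] [Algebra ℂ R] {n m : ℕ} (q : Matrix (Fin n) (Fin n) ℂ)
    (p : Matrix (Fin m) (Fin m) ℂ) (M : Matrix (Fin n) (Fin m) R) : Prop :=
  (∀ (i j : Fin n) (k : Fin m), i < j → M i k * M j k = q j i • (M j k * M i k)) ∧
  ∀ (i j : Fin n) (k l : Fin m), i < j → k < l →
    M i k * M j l - (q j i * p k l) • (M j l * M i k) + p k l • (M i l * M j k)
      - q j i • (M j k * M i l) = 0

/-- The increasing enumeration of the complement of a subset `J ⊆ {1,…,n}` of card `r`. -/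
def complEnum {n r : ℕ} (J : Finset (Fin n)) (hJ : J.card = r) : Fin (n - r) → Fin n :=
  ⇑(Jᶜ.orderEmbOfFin (by simp [Finset.card_compl, hJ]))

/-! ### Auxiliary development -/

section Aux

variable {R : Type*} [Ring R] [Algebra ℂ R] {n : ℕ}

/-- `coefQ q i S = ∏_{j ∈ S, j < i} (-q i j)`. -/
def coefQ (q : Matrix (Fin n) (Fin n) ℂ) (i : Fin n) (S : Finset (Fin n)) : ℂ :=
  ∏ j ∈ S, if j < i then -q i j else 1

/-- `kap q A B = ∏_{a∈A, b∈B, b<a} (-q a b)`. -/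
def kap (q : Matrix (Fin n) (Fin n) ℂ) (A B : Finset (Fin n)) : ℂ :=
  ∏ a ∈ A, coefQ q a B

/-- The operator `T_k` of left multiplication by `θ_k = ∑_i η_i ⊗ M_{ik}` in the
`q`-exterior-algebra model `Finset (Fin n) → R`. -/
def Tcol (q : Matrix (Fin n) (Fin n) ℂ) (M : Matrix (Fin n) (Fin n) R) (k : Fin n)
    (v : Finset (Fin n) → R) : Finset (Fin n) → R :=
  fun S => ∑ i ∈ S, coefQ q i S • (M i k * v (S.erase i))

def app (q : Matrix (Fin n) (Fin n) ℂ) (M : Matrix (Fin n) (Fin n) R)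
    (L : List (Fin n)) (v : Finset (Fin n) → R) : Finset (Fin n) → R :=
  L.foldr (Tcol q M) v

def delta0 : Finset (Fin n) → R := fun S => if S = ∅ then 1 else 0

def cdetE (q : Matrix (Fin n) (Fin n) ℂ) (M : Matrix (Fin n) (Fin n) R) (r : ℕ)
    (J : Finset (Fin n)) (ks : Fin r → Fin n) : R :=
  if h : J.card = r then cdet q M (⇑(J.orderEmbOfFin h)) ks else 0

def epsL (q : Matrix (Fin n) (Fin n) ℂ) : List (Fin n) → ℂ
  | [] => 1
  | k :: L => (L.map (fun j => if j < k then -q k j else 1)).prod * epsL q L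

variable (q p : Matrix (Fin n) (Fin n) ℂ) (M : Matrix (Fin n) (Fin n) R)

set_option linter.unusedSectionVars false in
@[simp] lemma app_nil (v : Finset (Fin n) → R) : app q M [] v = v := rfl

@[simp] lemma app_cons (k : Fin n) (L : List (Fin n)) (v : Finset (Fin n) → R) :
    app q M (k :: L) v = Tcol q M k (app q M L v) := rfl

lemma app_append (L L' : List (Fin n)) (v : Finset (Fin n) → R) :
    app q M (L ++ L') v = app q M L (app q M L' v) := List.foldr_append

@[simp] lemma Top_zero (k : Fin n) : Tcol q M k (0 : Finset (Fin n) → R) = 0 := by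
  funext S; simp [Tcol]

@[simp] lemma Top_smul (k : Fin n) (c : ℂ) (v : Finset (Fin n) → R) :
    Tcol q M k (c • v) = c • Tcol q M k v := by
  funext S
  simp only [Tcol, Pi.smul_apply, Finset.smul_sum]
  refine Finset.sum_congr rfl fun i _ => ?_
  rw [mul_smul_comm, smul_comm]

/-- coefQ of a larger set splits. -/
lemma coefQ_union {A B : Finset (Fin n)} (hd : Disjoint A B) (i : Fin n) :
    coefQ q i (A ∪ B) = coefQ q i A * coefQ q i B := by
  unfold coefQ
  rw [Finset.prod_union hd]

lemma coefQ_erase_of_not_lt {S : Finset (Fin n)} {i j : Fin n} (h : ¬ i < j) :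
    coefQ q j (S.erase i) = coefQ q j S := by
  by_cases hi : i ∈ S
  · unfold coefQ
    rw [← Finset.mul_prod_erase S _ hi, if_neg h, one_mul]
  · rw [Finset.erase_eq_of_notMem hi]

lemma coefQ_erase_of_lt {S : Finset (Fin n)} {i j : Fin n} (hi : i ∈ S) (h : i < j) :
    coefQ q j S = -q j i * coefQ q j (S.erase i) := by
  unfold coefQ
  rw [← Finset.mul_prod_erase S _ hi, if_pos h]


set_option linter.unusedSectionVars false in
lemma sum_pair_cancel (S : Finset (Fin n)) (F : Fin n → Fin n → R)
    (h : ∀ i ∈ S, ∀ j ∈ S, i < j → F i j + F j i = 0) :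
    ∑ i ∈ S, ∑ j ∈ S.erase i, F i j = 0 := by
  have step : ∀ i, ∑ j ∈ S.erase i, F i j
      = (∑ j ∈ S, if j < i then F i j else 0) + ∑ j ∈ S, if i < j then F i j else 0 := by
    intro i
    rw [← Finset.sum_add_distrib]
    rw [show (∑ j ∈ S.erase i, F i j)
        = ∑ j ∈ S.erase i, ((if j < i then F i j else 0) + if i < j then F i j else 0) from
      Finset.sum_congr rfl fun j hj => by
        rcases lt_trichotomy j i with h' | h' | h'
        · rw [if_pos h', if_neg (asymm h'), add_zero]
        · exact absurd h' (Finset.ne_of_mem_erase hj)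
        · rw [if_neg (asymm h'), if_pos h', zero_add]]
    exact Finset.sum_erase _ (by simp)
  calc ∑ i ∈ S, ∑ j ∈ S.erase i, F i j
      = (∑ i ∈ S, ∑ j ∈ S, if j < i then F i j else 0)
        + ∑ i ∈ S, ∑ j ∈ S, if i < j then F i j else 0 := by
        rw [← Finset.sum_add_distrib]; exact Finset.sum_congr rfl fun i _ => step i
    _ = (∑ i ∈ S, ∑ j ∈ S, if i < j then F j i else 0)
        + ∑ i ∈ S, ∑ j ∈ S, if i < j then F i j else 0 := by rw [Finset.sum_comm]
    _ = ∑ i ∈ S, ∑ j ∈ S, ((if i < j then F j i else 0) + if i < j then F i j else 0) := by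
        rw [← Finset.sum_add_distrib]
        exact Finset.sum_congr rfl fun i _ => (Finset.sum_add_distrib).symm
    _ = 0 := by
        refine Finset.sum_eq_zero fun i hi => Finset.sum_eq_zero fun j hj => ?_
        by_cases hij : i < j
        · rw [if_pos hij, if_pos hij, ← add_comm (F i j), h i hi j hj hij]
        · rw [if_neg hij, if_neg hij, add_zero]

lemma Tcol_Tcol_apply (k l : Fin n) (v : Finset (Fin n) → R) (S : Finset (Fin n)) :
    Tcol q M k (Tcol q M l v) S = ∑ i ∈ S, ∑ j ∈ S.erase i,
      (coefQ q i S * coefQ q j (S.erase i)) • (M i k * (M j l * v ((S.erase i).erase j))) := by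
  simp only [Tcol]
  refine Finset.sum_congr rfl fun i hi => ?_
  rw [Finset.mul_sum, Finset.smul_sum]
  refine Finset.sum_congr rfl fun j hj => ?_
  rw [mul_smul_comm, smul_smul]

variable {q p M} in
lemma coef_swap {S : Finset (Fin n)} {i j : Fin n} (hi : i ∈ S) (hij : i < j) :
    coefQ q j S * coefQ q i (S.erase j) = -q j i * (coefQ q i S * coefQ q j (S.erase i)) := by
  rw [coefQ_erase_of_lt q hi hij, coefQ_erase_of_not_lt q (asymm hij)]
  ring

variable {q p M} in
lemma Tcol_Tcol_self (hM : IsManin q p M) (k : Fin n) (v : Finset (Fin n) → R) :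
    Tcol q M k (Tcol q M k v) = 0 := by
  funext S
  rw [Tcol_Tcol_apply, Pi.zero_apply]
  refine sum_pair_cancel S _ fun i hi j hj hij => ?_
  rw [Finset.erase_right_comm (s := S) (a := j) (b := i), coef_swap hi hij]
  set w := v ((S.erase i).erase j) with hw
  have h1 : M i k * (M j k * w) = q j i • (M j k * (M i k * w)) := by
    have := congrArg (fun x => x * w) (hM.1 i j k hij)
    simpa only [mul_assoc, smul_mul_assoc] using this
  rw [h1, smul_smul]
  rw [← add_smul]
  convert zero_smul ℂ _ using 2
  ring

variable {q p M} in
lemma Tcol_Tcol_lt (hM : IsManin q p M) {k l : Fin n} (hkl : k < l) (v : Finset (Fin n) → R) :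
    Tcol q M k (Tcol q M l v) = (-p k l) • Tcol q M l (Tcol q M k v) := by
  have main : Tcol q M k (Tcol q M l v) + p k l • Tcol q M l (Tcol q M k v) = 0 := by
    funext S
    rw [Pi.add_apply, Pi.smul_apply, Tcol_Tcol_apply, Tcol_Tcol_apply, Pi.zero_apply,
      Finset.smul_sum]
    rw [← Finset.sum_add_distrib]
    have : ∀ i ∈ S, (∑ j ∈ S.erase i,
          (coefQ q i S * coefQ q j (S.erase i)) • (M i k * (M j l * v ((S.erase i).erase j))))
        + (p k l • ∑ j ∈ S.erase i,
          (coefQ q i S * coefQ q j (S.erase i)) • (M i l * (M j k * v ((S.erase i).erase j))))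
        = ∑ j ∈ S.erase i,
          ((coefQ q i S * coefQ q j (S.erase i)) • (M i k * (M j l * v ((S.erase i).erase j)))
          + (p k l * (coefQ q i S * coefQ q j (S.erase i)))
            • (M i l * (M j k * v ((S.erase i).erase j)))) := by
      intro i _
      rw [Finset.smul_sum, ← Finset.sum_add_distrib]
      exact Finset.sum_congr rfl fun j _ => by rw [smul_smul]
    rw [Finset.sum_congr rfl this]
    refine sum_pair_cancel S _ fun i hi j hj hij => ?_
    rw [Finset.erase_right_comm (s := S) (a := j) (b := i), coef_swap hi hij]
    set c := coefQ q i S * coefQ q j (S.erase i) with hc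
    set w := v ((S.erase i).erase j) with hw
    have h2 := hM.2 i j k l hij hkl
    have h2w : M i k * (M j l * w) - (q j i * p k l) • (M j l * (M i k * w))
        + p k l • (M i l * (M j k * w)) - q j i • (M j k * (M i l * w)) = 0 := by
      have := congrArg (fun x => x * w) h2
      simpa only [sub_mul, add_mul, smul_mul_assoc, mul_assoc, zero_mul] using this
    have key : c • (M i k * (M j l * w) - (q j i * p k l) • (M j l * (M i k * w))
        + p k l • (M i l * (M j k * w)) - q j i • (M j k * (M i l * w))) = 0 := by
      rw [h2w, smul_zero]
    calc c • (M i k * (M j l * w)) + (p k l * c) • (M i l * (M j k * w))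
          + ((-q j i * c) • (M j k * (M i l * w))
            + (p k l * (-q j i * c)) • (M j l * (M i k * w)))
        = c • (M i k * (M j l * w) - (q j i * p k l) • (M j l * (M i k * w))
          + p k l • (M i l * (M j k * w)) - q j i • (M j k * (M i l * w))) := by module
      _ = 0 := key
  have := congrArg (fun x => x - p k l • Tcol q M l (Tcol q M k v)) main
  simpa [add_sub_cancel_right, neg_smul, sub_eq_iff_eq_add'] using this

variable {q p M} in
lemma Tcol_Tcol_ne (hp : IsParametric p) (hM : IsManin q p M)
    {k l : Fin n} (hkl : k ≠ l) (v : Finset (Fin n) → R) :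
    Tcol q M k (Tcol q M l v) = (-p k l) • Tcol q M l (Tcol q M k v) := by
  rcases lt_or_gt_of_ne hkl with h | h
  · exact Tcol_Tcol_lt hM h v
  · have h1 := Tcol_Tcol_lt hM h (v := v)
    rw [h1, smul_smul]
    have : -p k l * -p l k = 1 := by
      have := hp.2.1 k l
      ring_nf
      ring_nf at this
      linear_combination this
    rw [show (-p k l * -p l k : ℂ) = 1 from this, one_smul]


variable {q p M} in
lemma Tcol_app_sorted (hp : IsParametric p) (hM : IsManin q p M) :
    ∀ (s : List (Fin n)), s.Pairwise (· < ·) → ∀ (k : Fin n) (v : Finset (Fin n) → R),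
    Tcol q M k (app q M s v) = if k ∈ s then 0 else
      ((s.map fun j => if j < k then -p k j else 1).prod) •
        app q M (List.orderedInsert (· ≤ ·) k s) v := by
  intro s
  induction s with
  | nil =>
      intro _ k v
      simp [List.orderedInsert]
  | cons a s' ih =>
      intro hsort k v
      have hs' : s'.Pairwise (· < ·) := (List.pairwise_cons.mp hsort).2
      have ha : ∀ b ∈ s', a < b := (List.pairwise_cons.mp hsort).1
      by_cases hka : k ≤ a
      · rcases eq_or_lt_of_le hka with heq | hlt
        · subst heq
          rw [if_pos List.mem_cons_self]
          show Tcol q M k (Tcol q M k (app q M s' v)) = 0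
          exact Tcol_Tcol_self hM k _
        · have hknot : k ∉ a :: s' := by
            intro hmem
            rcases List.mem_cons.mp hmem with h | h
            · exact absurd h (ne_of_lt hlt)
            · exact absurd (ha k h) (asymm (hlt.trans (ha k h)) ∘ fun _ => hlt.trans (ha k h))
          rw [if_neg hknot]
          have hprod : ((a :: s').map fun j => if j < k then -p k j else 1).prod = 1 := by
            apply List.prod_eq_one
            intro x hx
            rcases List.mem_map.mp hx with ⟨j, hj, rfl⟩
            rcases List.mem_cons.mp hj with h | h
            · subst h; rw [if_neg (asymm hlt)]
            · rw [if_neg (asymm (hlt.trans (ha j h)))]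
          rw [hprod, one_smul]
          rw [List.orderedInsert, if_pos hka]
          rfl
      · push_neg at hka
        have hne : k ≠ a := ne_of_gt hka
        show Tcol q M k (Tcol q M a (app q M s' v)) = _
        rw [Tcol_Tcol_ne hp hM hne, ih hs' k v]
        rw [List.orderedInsert, if_neg (not_le_of_gt hka)]
        by_cases hk' : k ∈ s'
        · rw [if_pos hk', if_pos (List.mem_cons.mpr (Or.inr hk'))]
          simp
        · have : k ∉ a :: s' := by
            intro hmem
            rcases List.mem_cons.mp hmem with h | h
            · exact hne h
            · exact hk' h
          rw [if_neg hk', if_neg this]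
          rw [Top_smul, smul_smul]
          show _ = _ • app q M (a :: List.orderedInsert (· ≤ ·) k s') v
          rw [List.map_cons, List.prod_cons, if_pos hka]
          rfl

variable {q p M} in
lemma app_eq_epsL (hp : IsParametric p) (hM : IsManin q p M) :
    ∀ (L : List (Fin n)) (v : Finset (Fin n) → R), L.Nodup →
      app q M L v = epsL p L • app q M (List.insertionSort (· ≤ ·) L) v := by
  intro L
  induction L with
  | nil => intro v _; simp [epsL]
  | cons k L' ih =>
      intro v hnd
      have hkL' : k ∉ L' := (List.nodup_cons.mp hnd).1
      have hnd' : L'.Nodup := (List.nodup_cons.mp hnd).2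
      have hperm : (List.insertionSort (· ≤ ·) L').Perm L' := List.perm_insertionSort _ _
      have hsortle : List.Pairwise (· ≤ ·) (List.insertionSort (· ≤ ·) L') := List.pairwise_insertionSort _ _
      have hsortnd : List.Nodup (List.insertionSort (· ≤ ·) L') := hperm.nodup_iff.mpr hnd'
      have hsortlt : List.Pairwise (· < ·) (List.insertionSort (· ≤ ·) L') :=
        (hsortle.and hsortnd).imp fun h => lt_of_le_of_ne h.1 h.2
      show Tcol q M k (app q M L' v) = _
      rw [ih v hnd', Top_smul, Tcol_app_sorted hp hM _ hsortlt k v,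
        if_neg (fun h => hkL' (hperm.mem_iff.mp h)), smul_smul]
      show _ = epsL p (k :: L') • app q M (List.orderedInsert (· ≤ ·) k
        (List.insertionSort (· ≤ ·) L')) v
      congr 1
      show _ = (L'.map fun j => if j < k then -p k j else 1).prod * epsL p L'
      rw [(hperm.map fun j => if j < k then -p k j else 1).prod_eq]
      ring

variable {q p M} in
lemma app_eq_zero_of_dup (hp : IsParametric p) (hM : IsManin q p M) :
    ∀ (L : List (Fin n)) (v : Finset (Fin n) → R), ¬ L.Nodup → app q M L v = 0 := by
  intro L
  induction L with
  | nil => intro v h; exact absurd List.nodup_nil h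
  | cons k L' ih =>
      intro v hnd
      by_cases hnd' : L'.Nodup
      · have hkL' : k ∈ L' := by
          by_contra hk
          exact hnd (List.nodup_cons.mpr ⟨hk, hnd'⟩)
        have hperm : (List.insertionSort (· ≤ ·) L').Perm L' := List.perm_insertionSort _ _
        have hsortle : List.Pairwise (· ≤ ·) (List.insertionSort (· ≤ ·) L') := List.pairwise_insertionSort _ _
        have hsortnd : List.Nodup (List.insertionSort (· ≤ ·) L') := hperm.nodup_iff.mpr hnd'
        have hsortlt : List.Pairwise (· < ·) (List.insertionSort (· ≤ ·) L') :=
        (hsortle.and hsortnd).imp fun h => lt_of_le_of_ne h.1 h.2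
        show Tcol q M k (app q M L' v) = 0
        rw [app_eq_epsL hp hM L' v hnd', Top_smul,
          Tcol_app_sorted hp hM _ hsortlt k v, if_pos (hperm.mem_iff.mpr hkL'), smul_zero]
      · show Tcol q M k (app q M L' v) = 0
        rw [ih v hnd', Top_zero]


omit [Ring R] [Algebra ℂ R] in
set_option linter.unusedSectionVars false in
lemma manEps_eq_prod {r : ℕ} (I : Fin r → Fin n) (σ : Equiv.Perm (Fin r)) :
    manEps q I σ = ∏ s : Fin r, ∏ t : Fin r,
      if s < t ∧ σ t < σ s then -q (I (σ s)) (I (σ t)) else 1 := by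
  rw [manEps, Finset.prod_filter]
  exact Fintype.prod_prod_type' (f := fun s t =>
    if s < t ∧ σ t < σ s then -q (I (σ s)) (I (σ t)) else 1)

lemma prod_pairs_succ {m : ℕ} (G : Fin (m+1) → Fin (m+1) → ℂ)
    (h0 : G 0 0 = 1) (hs0 : ∀ s : Fin m, G s.succ 0 = 1) :
    ∏ s, ∏ t, G s t
      = (∏ t : Fin m, G 0 t.succ) * ∏ s : Fin m, ∏ t : Fin m, G s.succ t.succ := by
  rw [Fin.prod_univ_succ (f := fun s => ∏ t, G s t)]
  rw [Fin.prod_univ_succ (f := fun t => G 0 t), h0, one_mul]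
  congr 1
  refine Finset.prod_congr rfl fun s _ => ?_
  rw [Fin.prod_univ_succ (f := fun t => G s.succ t), hs0, one_mul]

/-- The order-compatible decomposition `Perm (Fin (r+1)) ≃ Fin (r+1) × Perm (Fin r)`. -/
def permIns {r : ℕ} (a : Fin (r+1)) (τ : Equiv.Perm (Fin r)) : Equiv.Perm (Fin (r+1)) :=
  ((finSuccEquiv r).trans (τ.optionCongr.trans (finSuccEquiv' a).symm))

@[simp] lemma permIns_zero {r : ℕ} (a : Fin (r+1)) (τ : Equiv.Perm (Fin r)) :
    permIns a τ 0 = a := by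
  simp [permIns]

@[simp] lemma permIns_succ {r : ℕ} (a : Fin (r+1)) (τ : Equiv.Perm (Fin r)) (i : Fin r) :
    permIns a τ i.succ = a.succAbove (τ i) := by
  simp [permIns]

lemma permIns_bijective {r : ℕ} :
    Function.Bijective (fun x : Fin (r+1) × Equiv.Perm (Fin r) => permIns x.1 x.2) := by
  rw [Fintype.bijective_iff_injective_and_card]
  constructor
  · rintro ⟨a, τ⟩ ⟨a', τ'⟩ h
    simp only at h
    have h0 : a = a' := by
      have := DFunLike.congr_fun h 0
      simpa using this
    subst h0
    have hτ : τ = τ' := Equiv.ext fun i => Fin.succAbove_right_injective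
      (p := a) (by simpa using DFunLike.congr_fun h i.succ)
    subst hτ
    rfl
  · simp [Fintype.card_perm, Fintype.card_fin, Nat.factorial_succ]

omit [Ring R] [Algebra ℂ R] in
set_option linter.unusedSectionVars false in
lemma manEps_permIns {r : ℕ} (I : Fin (r+1) → Fin n) (a : Fin (r+1)) (τ : Equiv.Perm (Fin r)) :
    manEps q I (permIns a τ)
      = (∏ b : Fin r, if a.succAbove b < a then -q (I a) (I (a.succAbove b)) else 1)
        * manEps q (I ∘ a.succAbove) τ := by
  rw [manEps_eq_prod, manEps_eq_prod]
  rw [prod_pairs_succ (G := fun s t => if s < t ∧ permIns a τ t < permIns a τ s then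
      -q (I (permIns a τ s)) (I (permIns a τ t)) else 1) (by simp) (fun s => by simp)]
  congr 1
  · rw [← Equiv.prod_comp τ (fun b =>
      if a.succAbove b < a then -q (I a) (I (a.succAbove b)) else 1)]
    refine Finset.prod_congr rfl fun t _ => ?_
    simp only [permIns_zero, permIns_succ, Fin.succ_pos, true_and]
  · refine Finset.prod_congr rfl fun s _ => Finset.prod_congr rfl fun t _ => ?_
    simp only [permIns_succ, Fin.succ_lt_succ_iff, Fin.succAbove_lt_succAbove_iff,
      Function.comp_apply]

omit [Ring R] [Algebra ℂ R] in
set_option linter.unusedSectionVars false in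
lemma orderEmbOfFin_erase {J : Finset (Fin n)} {r : ℕ} (h : J.card = r + 1) (a : Fin (r+1))
    (h' : (J.erase (J.orderEmbOfFin h a)).card = r) :
    ⇑((J.erase (J.orderEmbOfFin h a)).orderEmbOfFin h')
      = fun b => J.orderEmbOfFin h (a.succAbove b) := by
  symm
  apply Finset.orderEmbOfFin_unique h'
  · intro b
    rw [Finset.mem_erase]
    exact ⟨(J.orderEmbOfFin h).injective.ne (Fin.succAbove_ne a b),
      Finset.orderEmbOfFin_mem J h _⟩
  · exact (J.orderEmbOfFin h).strictMono.comp (Fin.strictMono_succAbove a)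

omit [Ring R] [Algebra ℂ R] in
set_option linter.unusedSectionVars false in
lemma coefA_eq_coefQ {J : Finset (Fin n)} {r : ℕ} (h : J.card = r + 1) (a : Fin (r+1)) :
    (∏ b : Fin r, if a.succAbove b < a then
        -q (J.orderEmbOfFin h a) (J.orderEmbOfFin h (a.succAbove b)) else 1)
      = coefQ q (J.orderEmbOfFin h a) J := by
  set e := J.orderEmbOfFin h with he
  have hJprod : coefQ q (e a) J = ∏ x : Fin (r+1), (if e x < e a then -q (e a) (e x) else 1) := by
    rw [coefQ]
    symm
    apply Finset.prod_bij (fun (x : Fin (r+1)) _ => e x)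
    · intro x _; exact Finset.orderEmbOfFin_mem J h x
    · intro x _ y _ hxy; exact e.injective hxy
    · intro j hj
      have : j ∈ Set.range e := by rw [Finset.range_orderEmbOfFin]; exact hj
      rcases this with ⟨x, rfl⟩
      exact ⟨x, Finset.mem_univ x, rfl⟩
    · intro x _; rfl
  rw [hJprod, Fin.prod_univ_succAbove (fun x => if e x < e a then -q (e a) (e x) else 1) a,
    if_neg (lt_irrefl (e a)), one_mul]
  refine Finset.prod_congr rfl fun b _ => ?_
  congr 1
  simp [e.strictMono.lt_iff_lt]


lemma cdet_fin_zero (I : Fin 0 → Fin n) (J : Fin 0 → Fin n) : cdet q M I J = 1 := by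
  simp [cdet, manEps]

lemma cdet_recursion {r : ℕ} {J : Finset (Fin n)} (h : J.card = r + 1) (ks : Fin (r+1) → Fin n) :
    cdet q M (⇑(J.orderEmbOfFin h)) ks
      = ∑ i ∈ J, coefQ q i J • (M i (ks 0) * cdetE q M r (J.erase i) (ks ∘ Fin.succ)) := by
  set e := J.orderEmbOfFin h with he
  have hre := Fintype.sum_bijective (fun x : Fin (r+1) × Equiv.Perm (Fin r) => permIns x.1 x.2)
    permIns_bijective
    (fun x => manEps q ⇑e (permIns x.1 x.2) •
      (List.ofFn fun b => M (e (permIns x.1 x.2 b)) (ks b)).prod)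
    (fun σ => manEps q ⇑e σ • (List.ofFn fun b => M (e (σ b)) (ks b)).prod)
    (fun x => rfl)
  rw [cdet, ← hre, Fintype.sum_prod_type]
  have hterm : ∀ a : Fin (r+1),
      (∑ τ : Equiv.Perm (Fin r), manEps q ⇑e (permIns a τ) •
        (List.ofFn fun b => M (e (permIns a τ b)) (ks b)).prod)
      = coefQ q (e a) J • (M (e a) (ks 0) * cdetE q M r (J.erase (e a)) (ks ∘ Fin.succ)) := by
    intro a
    have h' : (J.erase (e a)).card = r := by
      rw [Finset.card_erase_of_mem (Finset.orderEmbOfFin_mem J h a), h]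
      omega
    rw [cdetE, dif_pos h', orderEmbOfFin_erase h a h']
    have hτ : ∀ τ : Equiv.Perm (Fin r),
        manEps q ⇑e (permIns a τ) • (List.ofFn fun b => M (e (permIns a τ b)) (ks b)).prod
        = coefQ q (e a) J • (M (e a) (ks 0) *
            (manEps q (⇑e ∘ a.succAbove) τ •
              (List.ofFn fun b => M ((⇑e ∘ a.succAbove) (τ b)) ((ks ∘ Fin.succ) b)).prod)) := by
      intro τ
      rw [manEps_permIns, coefA_eq_coefQ q h a]
      rw [List.ofFn_succ, List.prod_cons]
      simp only [permIns_zero, permIns_succ, Function.comp_apply, ← he]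
      rw [mul_smul_comm, smul_smul]
    rw [Finset.sum_congr rfl (fun τ _ => hτ τ), ← Finset.smul_sum, ← Finset.mul_sum]
    rfl
  rw [Finset.sum_congr rfl (fun a _ => hterm a)]
  symm
  apply Finset.sum_bij (fun (i : Fin n) (hi : i ∈ J) =>
    (J.orderIsoOfFin h).symm ⟨i, hi⟩)
  · intro i hi; exact Finset.mem_univ _
  · intro i hi i' hi' hii'
    have := congrArg (fun x => ((J.orderIsoOfFin h) x : Fin n)) hii'
    simpa using this
  · intro a _
    refine ⟨(J.orderIsoOfFin h a : Fin n), (J.orderIsoOfFin h a).2, ?_⟩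
    have : (J.orderIsoOfFin h) a = ⟨(J.orderIsoOfFin h a : Fin n), (J.orderIsoOfFin h a).2⟩ :=
      Subtype.ext rfl
    rw [← this, OrderIso.symm_apply_apply]
  · intro i hi
    have : e ((J.orderIsoOfFin h).symm ⟨i, hi⟩) = i := by
      have h1 := (J.orderIsoOfFin h).apply_symm_apply ⟨i, hi⟩
      have h2 := congrArg Subtype.val h1
      rw [he]
      rw [← Finset.coe_orderIsoOfFin_apply]
      exact h2
    rw [this]


lemma coefQ_split {S J : Finset (Fin n)} (hJS : J ⊆ S) (i : Fin n) :
    coefQ q i S = coefQ q i J * coefQ q i (S \ J) := by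
  calc coefQ q i S = coefQ q i (J ∪ (S \ J)) := by rw [Finset.union_sdiff_of_subset hJS]
    _ = coefQ q i J * coefQ q i (S \ J) := coefQ_union q Finset.disjoint_sdiff i

lemma kap_erase {A B : Finset (Fin n)} {i : Fin n} (hi : i ∈ A) :
    kap q A B = coefQ q i B * kap q (A.erase i) B :=
  (Finset.mul_prod_erase A _ hi).symm

lemma erase_sdiff_eq {S J' : Finset (Fin n)} {i : Fin n} :
    (S.erase i) \ J' = S \ insert i J' := by
  ext a
  simp only [Finset.mem_sdiff, Finset.mem_erase, Finset.mem_insert]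
  tauto

lemma app_ofFn_apply : ∀ (r : ℕ) (ks : Fin r → Fin n) (v : Finset (Fin n) → R)
    (S : Finset (Fin n)),
    app q M (List.ofFn ks) v S
      = ∑ J ∈ S.powersetCard r, kap q J (S \ J) • (cdetE q M r J ks * v (S \ J)) := by
  intro r
  induction r with
  | zero =>
      intro ks v S
      rw [List.ofFn_zero, Finset.powersetCard_zero, Finset.sum_singleton]
      show v S = _
      simp [kap, cdetE, cdet_fin_zero]
  | succ r ih =>
      intro ks v S
      rw [List.ofFn_succ]
      rw [show (fun i : Fin r => ks i.succ) = ks ∘ Fin.succ from rfl]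
      rw [app_cons]
      show ∑ i ∈ S, coefQ q i S •
          (M i (ks 0) * app q M (List.ofFn (ks ∘ Fin.succ)) v (S.erase i)) = _
      have stepA : ∀ i ∈ S, coefQ q i S •
          (M i (ks 0) * app q M (List.ofFn (ks ∘ Fin.succ)) v (S.erase i))
          = ∑ J' ∈ (S.erase i).powersetCard r,
              (coefQ q i S * kap q J' ((S.erase i) \ J')) •
                (M i (ks 0) * (cdetE q M r J' (ks ∘ Fin.succ) * v ((S.erase i) \ J'))) := by
        intro i _
        rw [ih (ks ∘ Fin.succ) v (S.erase i), Finset.mul_sum, Finset.smul_sum]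
        exact Finset.sum_congr rfl fun J' _ => by rw [mul_smul_comm, smul_smul]
      rw [Finset.sum_congr rfl stepA]
      rw [Finset.sum_sigma']
      rw [Finset.sum_nbij' (i := fun x : (_ : Fin n) × Finset (Fin n) => (⟨insert x.1 x.2, x.1⟩ :
            (_ : Finset (Fin n)) × Fin n))
          (j := fun y : (_ : Finset (Fin n)) × Fin n => (⟨y.2, y.1.erase y.2⟩ :
            (_ : Fin n) × Finset (Fin n)))
          (t := (S.powersetCard (r+1)).sigma fun J => J)
          (g := fun y => (kap q y.1 (S \ y.1) * coefQ q y.2 y.1) •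
            (M y.2 (ks 0) * (cdetE q M r (y.1.erase y.2) (ks ∘ Fin.succ) * v (S \ y.1))))]
      · rw [Finset.sum_sigma]
        refine Finset.sum_congr rfl fun J hJ => ?_
        rw [Finset.mem_powersetCard] at hJ
        have hJcard : J.card = r + 1 := hJ.2
        have inner : ∑ i ∈ J, (kap q J (S \ J) * coefQ q i J) •
            (M i (ks 0) * (cdetE q M r (J.erase i) (ks ∘ Fin.succ) * v (S \ J)))
            = kap q J (S \ J) •
              ((∑ i ∈ J, coefQ q i J • (M i (ks 0) * cdetE q M r (J.erase i) (ks ∘ Fin.succ)))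
                * v (S \ J)) := by
          rw [Finset.sum_mul, Finset.smul_sum]
          refine Finset.sum_congr rfl fun i _ => ?_
          rw [smul_mul_assoc, mul_assoc, ← smul_smul]
        rw [inner, ← cdet_recursion q M hJcard ks]
        rw [cdetE, dif_pos hJcard]
      · rintro ⟨i, J'⟩ hx
        rw [Finset.mem_sigma] at hx
        obtain ⟨hiS, hJ'⟩ := hx
        rw [Finset.mem_powersetCard] at hJ'
        have hiJ' : i ∉ J' := fun hmem => (Finset.mem_erase.mp (hJ'.1 hmem)).1 rfl
        rw [Finset.mem_sigma]
        constructor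
        · rw [Finset.mem_powersetCard]
          exact ⟨Finset.insert_subset hiS (hJ'.1.trans (Finset.erase_subset _ _)),
            by rw [Finset.card_insert_of_notMem hiJ', hJ'.2]⟩
        · exact Finset.mem_insert_self _ _
      · rintro ⟨J, i⟩ hy
        rw [Finset.mem_sigma] at hy
        obtain ⟨hJ, hiJ⟩ := hy
        rw [Finset.mem_powersetCard] at hJ
        rw [Finset.mem_sigma]
        constructor
        · exact hJ.1 hiJ
        · rw [Finset.mem_powersetCard]
          exact ⟨Finset.erase_subset_erase _ hJ.1,
            by rw [Finset.card_erase_of_mem hiJ, hJ.2]; omega⟩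
      · rintro ⟨i, J'⟩ hx
        rw [Finset.mem_sigma] at hx
        obtain ⟨hiS, hJ'⟩ := hx
        rw [Finset.mem_powersetCard] at hJ'
        have hiJ' : i ∉ J' := fun hmem => (Finset.mem_erase.mp (hJ'.1 hmem)).1 rfl
        simp [Finset.erase_insert hiJ']
      · rintro ⟨J, i⟩ hy
        rw [Finset.mem_sigma] at hy
        simp [Finset.insert_erase hy.2]
      · rintro ⟨i, J'⟩ hx
        rw [Finset.mem_sigma] at hx
        obtain ⟨hiS, hJ'⟩ := hx
        rw [Finset.mem_powersetCard] at hJ'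
        have hiJ' : i ∉ J' := fun hmem => (Finset.mem_erase.mp (hJ'.1 hmem)).1 rfl
        have hJsub : insert i J' ⊆ S :=
          Finset.insert_subset hiS (hJ'.1.trans (Finset.erase_subset _ _))
        have hBeq : (S.erase i) \ J' = S \ insert i J' := erase_sdiff_eq
        have hscalar : coefQ q i S * kap q J' ((S.erase i) \ J')
            = kap q (insert i J') (S \ insert i J') * coefQ q i (insert i J') := by
          rw [hBeq, kap_erase q (Finset.mem_insert_self i J'), Finset.erase_insert hiJ',
            coefQ_split q hJsub i]
          ring
        dsimp only
        rw [hscalar, hBeq, Finset.erase_insert hiJ']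
  

lemma app_ofFn_delta0 (m : ℕ) (ks : Fin m → Fin n) (S : Finset (Fin n)) :
    app q M (List.ofFn ks) (delta0 (R := R)) S = cdetE q M m S ks := by
  rw [app_ofFn_apply]
  have hterm : ∀ J ∈ S.powersetCard m,
      kap q J (S \ J) • (cdetE q M m J ks * delta0 (S \ J))
        = if J = S then cdetE q M m S ks else 0 := by
    intro J hJ
    rw [Finset.mem_powersetCard] at hJ
    by_cases hJS : J = S
    · subst hJS
      rw [if_pos rfl]
      simp [delta0, kap, coefQ]
    · have hne : S \ J ≠ ∅ := fun h0 =>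
        hJS (Finset.Subset.antisymm hJ.1 ((Finset.sdiff_eq_empty_iff_subset).mp h0))
      rw [if_neg hJS]
      simp [delta0, hne]
  rw [Finset.sum_congr rfl hterm, Finset.sum_ite_eq' (S.powersetCard m) S
    (fun _ => cdetE q M m S ks)]
  by_cases hc : S.card = m
  · rw [if_pos (Finset.mem_powersetCard.mpr ⟨Finset.Subset.refl S, hc⟩)]
  · rw [if_neg (fun hmem => hc (Finset.mem_powersetCard.mp hmem).2), cdetE, dif_neg hc]

omit [Ring R] [Algebra ℂ R] in
set_option linter.unusedSectionVars false in
lemma orderEmbOfFin_univ_id (hcard : (Finset.univ : Finset (Fin n)).card = n) :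
    ⇑((Finset.univ : Finset (Fin n)).orderEmbOfFin hcard) = (id : Fin n → Fin n) :=
  (Finset.orderEmbOfFin_unique hcard (fun x => Finset.mem_univ (id x)) strictMono_id).symm

omit [Ring R] [Algebra ℂ R] in
set_option linter.unusedSectionVars false in
lemma epsL_ofFn : ∀ (m : ℕ) (f : Fin m → Fin n),
    epsL q (List.ofFn f)
      = ∏ s : Fin m, ∏ t : Fin m, if s < t ∧ f t < f s then -q (f s) (f t) else 1 := by
  intro m
  induction m with
  | zero => intro f; simp [epsL]
  | succ m ih =>
      intro f
      rw [List.ofFn_succ]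
      show (((List.ofFn fun i => f i.succ).map fun j => if j < f 0 then -q (f 0) j else 1).prod)
          * epsL q (List.ofFn fun i => f i.succ) = _
      rw [prod_pairs_succ (G := fun s t => if s < t ∧ f t < f s then -q (f s) (f t) else 1)
        (by simp) (fun s => by simp)]
      congr 1
      · rw [List.map_ofFn, List.prod_ofFn]
        refine Finset.prod_congr rfl fun t _ => ?_
        simp [Fin.succ_pos]
      · rw [ih (fun i => f i.succ)]
        refine Finset.prod_congr rfl fun s _ => Finset.prod_congr rfl fun t _ => ?_
        simp [Fin.succ_lt_succ_iff]

omit [Ring R] [Algebra ℂ R] in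
set_option linter.unusedSectionVars false in
lemma manEpsIdx_eq_prod {r' : ℕ} {f : Fin r' → Fin n} (hinj : Function.Injective f) :
    manEpsIdx q f
      = ∏ s : Fin r', ∏ t : Fin r', if s < t ∧ f t < f s then -q (f s) (f t) else 1 := by
  rw [manEpsIdx, if_pos hinj, Finset.prod_filter]
  exact Fintype.prod_prod_type' (f := fun s t => if s < t ∧ f t < f s then -q (f s) (f t) else 1)

omit [Ring R] [Algebra ℂ R] in
set_option linter.unusedSectionVars false in
lemma prod_finset_eq_prod_fin {A : Finset (Fin n)} {a : ℕ} (hA : A.card = a) (g : Fin n → ℂ) :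
    ∏ x ∈ A, g x = ∏ s : Fin a, g (A.orderEmbOfFin hA s) := by
  symm
  apply Finset.prod_bij (fun (x : Fin a) _ => A.orderEmbOfFin hA x)
  · intro x _; exact Finset.orderEmbOfFin_mem A hA x
  · intro x _ y _ hxy; exact (A.orderEmbOfFin hA).injective hxy
  · intro j hj
    have : j ∈ Set.range (A.orderEmbOfFin hA) := by rw [Finset.range_orderEmbOfFin]; exact hj
    rcases this with ⟨x, rfl⟩
    exact ⟨x, Finset.mem_univ x, rfl⟩
  · intro x _; rfl

omit [Ring R] [Algebra ℂ R] in
set_option linter.unusedSectionVars false in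
lemma append_injective {a b : ℕ} (A B : Finset (Fin n)) (hA : A.card = a) (hB : B.card = b)
    (hd : Disjoint A B) :
    Function.Injective (Fin.append ⇑(A.orderEmbOfFin hA) ⇑(B.orderEmbOfFin hB)) := by
  set eA := A.orderEmbOfFin hA with heA
  set eB := B.orderEmbOfFin hB with heB
  intro x y hxy
  revert hxy
  refine Fin.addCases
    (motive := fun x => Fin.append ⇑eA ⇑eB x = Fin.append ⇑eA ⇑eB y → x = y) ?_ ?_ x
  · intro x'
    refine Fin.addCases
      (motive := fun y => Fin.append ⇑eA ⇑eB (Fin.castAdd b x') = Fin.append ⇑eA ⇑eB y →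
        Fin.castAdd b x' = y) ?_ ?_ y
    · intro y' h
      rw [Fin.append_left, Fin.append_left] at h
      exact congrArg (Fin.castAdd b) (eA.injective h)
    · intro y' h
      rw [Fin.append_left, Fin.append_right] at h
      have hmem : (eA x' : Fin n) ∈ B := h ▸ Finset.orderEmbOfFin_mem B hB y'
      exact absurd hmem (Finset.disjoint_left.mp hd (Finset.orderEmbOfFin_mem A hA x'))
  · intro x'
    refine Fin.addCases
      (motive := fun y => Fin.append ⇑eA ⇑eB (Fin.natAdd a x') = Fin.append ⇑eA ⇑eB y →
        Fin.natAdd a x' = y) ?_ ?_ y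
    · intro y' h
      rw [Fin.append_right, Fin.append_left] at h
      have hmem : (eB x' : Fin n) ∈ A := h ▸ Finset.orderEmbOfFin_mem A hA y'
      exact absurd hmem (Finset.disjoint_right.mp hd (Finset.orderEmbOfFin_mem B hB x'))
    · intro y' h
      rw [Fin.append_right, Fin.append_right] at h
      exact congrArg (Fin.natAdd a) (eB.injective h)


omit [Ring R] [Algebra ℂ R] in
set_option linter.unusedSectionVars false in
lemma manEpsIdx_append {a b : ℕ} (A B : Finset (Fin n)) (hA : A.card = a) (hB : B.card = b)
    (hd : Disjoint A B) :
    manEpsIdx q (Fin.append ⇑(A.orderEmbOfFin hA) ⇑(B.orderEmbOfFin hB)) = kap q A B := by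
  rw [manEpsIdx_eq_prod q (append_injective A B hA hB hd)]
  set eA := A.orderEmbOfFin hA with heA
  set eB := B.orderEmbOfFin hB with heB
  set f : Fin (a + b) → Fin n := Fin.append ⇑eA ⇑eB with hf
  have hAB : kap q A B = ∏ s : Fin a, ∏ t : Fin b,
      (if eB t < eA s then -q (eA s) (eB t) else 1) := by
    rw [kap, prod_finset_eq_prod_fin hA (fun x => coefQ q x B)]
    refine Finset.prod_congr rfl fun s _ => ?_
    rw [coefQ, prod_finset_eq_prod_fin hB (fun y => if y < eA s then -q (eA s) y else 1)]
  rw [hAB]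
  rw [Fin.prod_univ_add (f := fun s => ∏ t : Fin (a+b),
    if s < t ∧ f t < f s then -q (f s) (f t) else 1)]
  have hsecond : ∀ s : Fin b, (∏ t : Fin (a+b),
      if Fin.natAdd a s < t ∧ f t < f (Fin.natAdd a s) then -q (f (Fin.natAdd a s)) (f t) else 1)
        = 1 := by
    intro s
    rw [Fin.prod_univ_add (f := fun t =>
      if Fin.natAdd a s < t ∧ f t < f (Fin.natAdd a s) then -q (f (Fin.natAdd a s)) (f t) else 1)]
    rw [Finset.prod_eq_one fun t _ => if_neg ?_, Finset.prod_eq_one fun t _ => if_neg ?_,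
      one_mul]
    · rintro ⟨h1, h2⟩
      have hst : s < t := by
        rw [Fin.lt_def] at h1 ⊢
        simpa only [Fin.coe_natAdd] using Nat.lt_of_add_lt_add_left h1
      have : f (Fin.natAdd a s) < f (Fin.natAdd a t) := by
        rw [hf, Fin.append_right, Fin.append_right]
        exact eB.strictMono hst
      exact absurd h2 (asymm this)
    · rintro ⟨h1, _⟩
      rw [Fin.lt_def] at h1
      simp only [Fin.coe_natAdd, Fin.coe_castAdd] at h1
      have := t.isLt
      omega
  rw [Finset.prod_eq_one fun s _ => hsecond s, mul_one]
  refine Finset.prod_congr rfl fun s _ => ?_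
  rw [Fin.prod_univ_add (f := fun t =>
    if Fin.castAdd b s < t ∧ f t < f (Fin.castAdd b s) then -q (f (Fin.castAdd b s)) (f t) else 1)]
  rw [Finset.prod_eq_one fun t _ => if_neg ?_, one_mul]
  · refine Finset.prod_congr rfl fun t _ => ?_
    have hlt : Fin.castAdd b s < Fin.natAdd a t := by
      simp only [Fin.lt_def, Fin.coe_natAdd, Fin.coe_castAdd]
      have := s.isLt
      omega
    have hfl : f (Fin.castAdd b s) = eA s := by rw [hf, Fin.append_left]
    have hfr : f (Fin.natAdd a t) = eB t := by rw [hf, Fin.append_right]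
    rw [hfl, hfr]
    by_cases hc : eB t < eA s
    · rw [if_pos ⟨hlt, hc⟩, if_pos hc]
    · rw [if_neg (fun hh => hc hh.2), if_neg hc]
  · rintro ⟨h1, h2⟩
    have hst : s < t := by
      rw [Fin.lt_def] at h1 ⊢
      simpa only [Fin.coe_castAdd] using h1
    have : f (Fin.castAdd b s) < f (Fin.castAdd b t) := by
      rw [hf, Fin.append_left, Fin.append_left]
      exact eA.strictMono hst
    exact absurd h2 (asymm this)


omit [Ring R] [Algebra ℂ R] in
set_option linter.unusedSectionVars false in
lemma insertionSort_eq_finRange {L : List (Fin n)} (hnd : L.Nodup) (hlen : L.length = n) :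
    List.insertionSort (· ≤ ·) L = List.finRange n := by
  have htoF : L.toFinset = (List.finRange n).toFinset := by
    have h1 : L.toFinset = Finset.univ := Finset.eq_univ_of_card _
      (by rw [List.toFinset_card_of_nodup hnd, hlen, Fintype.card_fin])
    have h2 : (List.finRange n).toFinset = Finset.univ := Finset.eq_univ_of_card _
      (by rw [List.toFinset_card_of_nodup (List.nodup_finRange n), List.length_finRange,
        Fintype.card_fin])
    rw [h1, h2]
  apply fun h1 h2 h3 => List.Perm.eq_of_pairwise' (r := (· ≤ · : Fin n → Fin n → Prop)) h2 h3 h1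
  · exact (List.perm_insertionSort _ L).trans
      (List.perm_of_nodup_nodup_toFinset_eq hnd (List.nodup_finRange n) htoF)
  · exact List.pairwise_insertionSort _ _
  · exact (List.pairwise_lt_finRange n).imp le_of_lt

end Aux


/-- Laplace expansion for `(q̂,p̂)`-Manin matrices:
`ε(p̂, I⊕K) cdet_{q̂}(M) = ∑_J ε(q̂, J⊕J^c) cdet_{q̂}(M_{JI}) cdet_{q̂}(M_{J^c,K})`,
summed over all increasing multi-indices `J ⊆ {1,…,n}` of size `r`. -/
theorem laplace_expansion {R : Type*} [Ring R] [Algebra ℂ R] {n r : ℕ}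
    (q p : Matrix (Fin n) (Fin n) ℂ) (hq : IsParametric q) (hp : IsParametric p)
    (M : Matrix (Fin n) (Fin n) R) (hM : IsManin q p M)
    (I K : Finset (Fin n)) (hI : I.card = r) (hK : K.card = n - r) :
    manEpsIdx p (Fin.append ⇑(I.orderEmbOfFin hI) ⇑(K.orderEmbOfFin hK)) • cdet q M id id
      = ∑ J : {J : Finset (Fin n) // J.card = r},
          manEpsIdx q (Fin.append ⇑(J.1.orderEmbOfFin J.2) (complEnum J.1 J.2)) •
            (cdet q M ⇑(J.1.orderEmbOfFin J.2) ⇑(I.orderEmbOfFin hI) *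
              cdet q M (complEnum J.1 J.2) ⇑(K.orderEmbOfFin hK)) := by
  classical
  have hcardU : (Finset.univ : Finset (Fin n)).card = n := by simp
  have hrn : r ≤ n := by
    rw [← hI]
    simpa using Finset.card_le_univ I
  have hstep1 : (∑ J : {J : Finset (Fin n) // J.card = r},
        manEpsIdx q (Fin.append ⇑(J.1.orderEmbOfFin J.2) (complEnum J.1 J.2)) •
          (cdet q M ⇑(J.1.orderEmbOfFin J.2) ⇑(I.orderEmbOfFin hI) *
            cdet q M (complEnum J.1 J.2) ⇑(K.orderEmbOfFin hK)))
      = app q M (List.ofFn ⇑(I.orderEmbOfFin hI) ++ List.ofFn ⇑(K.orderEmbOfFin hK))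
          (delta0 (R := R)) Finset.univ := by
    rw [app_append, app_ofFn_apply]
    have hterm : ∀ J : {J : Finset (Fin n) // J.card = r},
        manEpsIdx q (Fin.append ⇑(J.1.orderEmbOfFin J.2) (complEnum J.1 J.2)) •
          (cdet q M ⇑(J.1.orderEmbOfFin J.2) ⇑(I.orderEmbOfFin hI) *
            cdet q M (complEnum J.1 J.2) ⇑(K.orderEmbOfFin hK))
        = kap q J.1 (Finset.univ \ J.1) • (cdetE q M r J.1 ⇑(I.orderEmbOfFin hI) *
            app q M (List.ofFn ⇑(K.orderEmbOfFin hK)) (delta0 (R := R)) (Finset.univ \ J.1)) := by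
      intro J
      have hc : (J.1ᶜ).card = n - r := by simp [Finset.card_compl, J.2]
      have h1 : manEpsIdx q (Fin.append ⇑(J.1.orderEmbOfFin J.2) (complEnum J.1 J.2))
          = kap q J.1 J.1ᶜ :=
        manEpsIdx_append q J.1 J.1ᶜ J.2 hc disjoint_compl_right
      have h2 : cdet q M ⇑(J.1.orderEmbOfFin J.2) ⇑(I.orderEmbOfFin hI)
          = cdetE q M r J.1 ⇑(I.orderEmbOfFin hI) := by rw [cdetE, dif_pos J.2]
      have h3 : cdet q M (complEnum J.1 J.2) ⇑(K.orderEmbOfFin hK)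
          = cdetE q M (n - r) J.1ᶜ ⇑(K.orderEmbOfFin hK) := by rw [cdetE, dif_pos hc]; rfl
      have h4 : cdetE q M (n - r) J.1ᶜ ⇑(K.orderEmbOfFin hK)
          = app q M (List.ofFn ⇑(K.orderEmbOfFin hK)) (delta0 (R := R)) J.1ᶜ :=
        (app_ofFn_delta0 q M (n - r) ⇑(K.orderEmbOfFin hK) J.1ᶜ).symm
      rw [h1, h2, h3, h4, Finset.compl_eq_univ_sdiff]
    rw [Finset.sum_congr rfl (fun J _ => hterm J)]
    exact (Finset.sum_subtype (Finset.powersetCard r Finset.univ)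
      (fun J => Finset.mem_powersetCard_univ)
      (fun J => kap q J (Finset.univ \ J) • (cdetE q M r J ⇑(I.orderEmbOfFin hI) *
        app q M (List.ofFn ⇑(K.orderEmbOfFin hK)) (delta0 (R := R)) (Finset.univ \ J)))).symm
  rw [hstep1]
  by_cases hnd : (List.ofFn ⇑(I.orderEmbOfFin hI) ++ List.ofFn ⇑(K.orderEmbOfFin hK)).Nodup
  · -- the multi-indices are disjoint
    have hlist : List.ofFn ⇑(I.orderEmbOfFin hI) ++ List.ofFn ⇑(K.orderEmbOfFin hK)
        = List.ofFn (Fin.append ⇑(I.orderEmbOfFin hI) ⇑(K.orderEmbOfFin hK)) :=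
      (List.ofFn_fin_append _ _).symm
    have hinj : Function.Injective (Fin.append ⇑(I.orderEmbOfFin hI) ⇑(K.orderEmbOfFin hK)) :=
      List.nodup_ofFn.mp (hlist ▸ hnd)
    have hlen : (List.ofFn ⇑(I.orderEmbOfFin hI) ++ List.ofFn ⇑(K.orderEmbOfFin hK)).length
        = n := by
      simp only [List.length_append, List.length_ofFn]
      omega
    have hsort := insertionSort_eq_finRange hnd hlen
    have happ := congrFun (app_eq_epsL hp hM
      (List.ofFn ⇑(I.orderEmbOfFin hI) ++ List.ofFn ⇑(K.orderEmbOfFin hK))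
      (delta0 (R := R)) hnd) Finset.univ
    rw [happ, hsort, Pi.smul_apply]
    have hfin : app q M (List.finRange n) (delta0 (R := R)) Finset.univ = cdet q M id id := by
      rw [← List.ofFn_id, app_ofFn_delta0, cdetE, dif_pos hcardU, orderEmbOfFin_univ_id]
    rw [hfin]
    have heps : epsL p (List.ofFn ⇑(I.orderEmbOfFin hI) ++ List.ofFn ⇑(K.orderEmbOfFin hK))
        = manEpsIdx p (Fin.append ⇑(I.orderEmbOfFin hI) ⇑(K.orderEmbOfFin hK)) := by
      rw [hlist, epsL_ofFn, manEpsIdx_eq_prod p hinj]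
    rw [heps]
  · -- overlapping multi-indices: both sides vanish
    have happ := congrFun (app_eq_zero_of_dup hp hM
      (List.ofFn ⇑(I.orderEmbOfFin hI) ++ List.ofFn ⇑(K.orderEmbOfFin hK))
      (delta0 (R := R)) hnd) Finset.univ
    rw [happ, Pi.zero_apply]
    have heps : manEpsIdx p (Fin.append ⇑(I.orderEmbOfFin hI) ⇑(K.orderEmbOfFin hK)) = 0 := by
      rw [manEpsIdx, if_neg]
      intro hinj
      exact hnd ((List.ofFn_fin_append _ _) ▸ List.nodup_ofFn.mpr hinj)
    rw [heps, zero_smul]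
end
end

section
/- (Inverse of a Manin matrix) Let M be an n×n (q̂,p̂)-Manin matrix over R such that cdet_{q̂}(M) is invertible in R. Define the n×n matrix N over R by N_{ij} = ε(p̂, i^c⊕(i))^{−1} · ε(q̂, j^c⊕(j)) · cdet_{q̂}(M)^{−1} · cdet_{q̂}(M_{j^c, i^c}). Then N·M is the identity n×n matrix over R; in particular, if M is invertible then M^{−1} = N. -/
open scoped BigOperators Classical

noncomputable section

/-- The increasing enumeration `i^c : Fin (n-1) → Fin n` of `{1,…,n} \ {i}`. -/
def complOne {n : ℕ} (i : Fin n) : Fin (n - 1) → Fin n :=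
  ⇑(({i}ᶜ : Finset (Fin n)).orderEmbOfFin (by simp [Finset.card_compl]))

namespace ManinAux

set_option linter.unusedSectionVars false

lemma cancel_two {R : Type*} [AddCommGroup R] [Module ℂ R] {x : R} (h : x + x = 0) : x = 0 := by
  have h2 : (2 : ℂ) • x = 0 := by
    have : ((1:ℂ) + 1) • x = x + x := by rw [add_smul, one_smul]
    rw [show (2:ℂ) = 1 + 1 by norm_num, this, h]
  calc x = ((2:ℂ)⁻¹ * 2) • x := by norm_num
  _ = (2:ℂ)⁻¹ • ((2:ℂ) • x) := by rw [mul_smul]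
  _ = 0 := by rw [h2, smul_zero]

section Lists

variable {R : Type*} [Monoid R]

lemma take_ofFn_congr {r s : ℕ} (f g : Fin r → R) (h : ∀ a : Fin r, (a : ℕ) < s → f a = g a) :
    (List.ofFn f).take s = (List.ofFn g).take s := by
  apply List.ext_getElem (by simp)
  intro i h1 h2
  simp only [List.getElem_take, List.getElem_ofFn]
  apply h
  simp only [List.length_take, List.length_ofFn, lt_min_iff] at h1
  exact h1.1

lemma drop_ofFn_congr {r s : ℕ} (f g : Fin r → R) (h : ∀ a : Fin r, s ≤ (a : ℕ) → f a = g a) :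
    (List.ofFn f).drop s = (List.ofFn g).drop s := by
  apply List.ext_getElem (by simp)
  intro i h1 h2
  simp only [List.getElem_drop, List.getElem_ofFn]
  apply h
  simp

lemma ofFn_prod_split {r : ℕ} (f : Fin r → R) (s : ℕ) (h : s + 1 < r) :
    (List.ofFn f).prod =
      ((List.ofFn f).take s).prod *
        (f ⟨s, by omega⟩ * f ⟨s + 1, by omega⟩) * ((List.ofFn f).drop (s + 2)).prod := by
  conv_lhs => rw [← List.take_append_drop s (List.ofFn f)]
  have h1 : (List.ofFn f).drop s = f ⟨s, by omega⟩ :: f ⟨s+1, by omega⟩ ::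
      (List.ofFn f).drop (s + 2) := by
    rw [List.drop_eq_getElem_cons (by simp; omega), List.drop_eq_getElem_cons (by simp; omega)]
    simp only [List.getElem_ofFn]
  rw [h1, List.prod_append, List.prod_cons, List.prod_cons, mul_assoc, mul_assoc]

end Lists

lemma manEps_mul_swap {n r : ℕ} (q : Matrix (Fin n) (Fin n) ℂ) (I : Fin r → Fin n)
    (σ : Equiv.Perm (Fin r)) (s t : Fin r) (hst : (s : ℕ) + 1 = (t : ℕ)) (hlt : σ s < σ t) :
    manEps q I (σ * Equiv.swap s t) = (-q (I (σ t)) (I (σ s))) * manEps q I σ := by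
  have hs : s < t := by rw [Fin.lt_def]; omega
  set T := Equiv.swap s t with hT
  have hTs : T s = t := Equiv.swap_apply_left s t
  have hTt : T t = s := Equiv.swap_apply_right s t
  have hTT : ∀ a, T (T a) = a := fun a => Equiv.swap_apply_self s t a
  have hv : ∀ a : Fin r, ((T a : Fin r) : ℕ) =
      if (a : ℕ) = (s : ℕ) then (t : ℕ) else if (a : ℕ) = (t : ℕ) then (s : ℕ) else (a : ℕ) := by
    intro a
    rw [hT, Equiv.swap_apply_def]
    split_ifs <;> simp_all [Fin.ext_iff]
  have hadj : ∀ a b : Fin r, a < b → ¬(a = s ∧ b = t) → T a < T b := by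
    intro a b hab hnot
    have hnot' : ¬((a : ℕ) = (s : ℕ) ∧ (b : ℕ) = (t : ℕ)) := by
      simp only [Fin.ext_iff] at hnot; exact_mod_cast hnot
    rw [Fin.lt_def] at hab ⊢
    rw [hv, hv]
    split_ifs <;> omega
  have hinj : ∀ x ∈ (Finset.univ.filter
      (fun st : Fin r × Fin r => st.1 < st.2 ∧ σ st.2 < σ st.1)), ∀ y ∈ (Finset.univ.filter
      (fun st : Fin r × Fin r => st.1 < st.2 ∧ σ st.2 < σ st.1)),
      (fun st : Fin r × Fin r => (T st.1, T st.2)) x = (fun st => (T st.1, T st.2)) y → x = y := by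
    intro x _ y _ hxy
    simp only [Prod.mk.injEq] at hxy
    exact Prod.ext (T.injective hxy.1) (T.injective hxy.2)
  have hnotmem : (s, t) ∉ (Finset.univ.filter
      (fun st : Fin r × Fin r => st.1 < st.2 ∧ σ st.2 < σ st.1)).image
      (fun st => (T st.1, T st.2)) := by
    simp only [Finset.mem_image, Finset.mem_filter, Finset.mem_univ, true_and, Prod.mk.injEq,
      not_exists, not_and, Prod.forall]
    intro a b hab h1 h2
    exfalso
    have ha : a = t := by rw [← hTT a, h1]; exact hTs
    have hb : b = s := by rw [← hTT b, h2]; exact hTt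
    rw [ha, hb] at hab
    exact absurd hab.1 (not_lt.2 hs.le)
  have hset : Finset.univ.filter
      (fun st : Fin r × Fin r => st.1 < st.2 ∧ (σ * T) st.2 < (σ * T) st.1)
      = insert (s, t) ((Finset.univ.filter
        (fun st : Fin r × Fin r => st.1 < st.2 ∧ σ st.2 < σ st.1)).image
        (fun st => (T st.1, T st.2))) := by
    apply Finset.ext
    rintro ⟨a, b⟩
    rw [Finset.mem_filter]
    simp only [Finset.mem_filter, Finset.mem_insert, Finset.mem_image, Finset.mem_univ, true_and,
      Equiv.Perm.mul_apply, Prod.mk.injEq, Prod.exists]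
    constructor
    · rintro ⟨hab, hσ⟩
      by_cases hcase : a = s ∧ b = t
      · exact Or.inl hcase
      · exact Or.inr ⟨T a, T b, ⟨hadj a b hab hcase, hσ⟩, hTT a, hTT b⟩
    · rintro (⟨rfl, rfl⟩ | ⟨x, y, ⟨hxy, hσ'⟩, hxa, hyb⟩)
      · exact ⟨hs, by rw [hTt, hTs]; exact hlt⟩
      · subst hxa; subst hyb
        refine ⟨hadj x y hxy ?_, by rw [hTT, hTT]; exact hσ'⟩
        rintro ⟨rfl, rfl⟩
        exact absurd hσ' (not_lt.2 hlt.le)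
  rw [manEps, manEps, hset, Finset.prod_insert hnotmem, Finset.prod_image hinj]
  congr 1
  · simp only [Equiv.Perm.mul_apply, hTs, hTt]
  · apply Finset.prod_congr rfl
    intro x _
    simp only [Equiv.Perm.mul_apply, hTT]

lemma complOne_eq_succAbove {m : ℕ} (i : Fin (m + 1)) (a : Fin m) :
    complOne i a = i.succAbove a := by
  have h := Finset.orderEmbOfFin_unique (s := ({i}ᶜ : Finset (Fin (m + 1))))
    (by simp [Finset.card_compl]) (f := i.succAbove)
    (fun x => by simp [Fin.succAbove_ne]) (Fin.strictMono_succAbove i)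
  exact (congrFun h a).symm

def insertLast {m : ℕ} (k : Fin (m + 1)) (τ : Equiv.Perm (Fin m)) : Equiv.Perm (Fin (m + 1)) :=
  (finSuccEquivLast.trans (Equiv.optionCongr τ)).trans (finSuccEquiv' k).symm

@[simp] lemma insertLast_castSucc {m : ℕ} (k : Fin (m + 1)) (τ : Equiv.Perm (Fin m)) (a : Fin m) :
    insertLast k τ (a.castSucc) = k.succAbove (τ a) := by
  simp [insertLast, finSuccEquiv'_symm_some]

@[simp] lemma insertLast_last {m : ℕ} (k : Fin (m + 1)) (τ : Equiv.Perm (Fin m)) :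
    insertLast k τ (Fin.last m) = k := by
  simp [insertLast]

lemma insertLast_bijective {m : ℕ} :
    Function.Bijective (fun x : Fin (m + 1) × Equiv.Perm (Fin m) => insertLast x.1 x.2) := by
  rw [Fintype.bijective_iff_injective_and_card]
  constructor
  · rintro ⟨k, τ⟩ ⟨k', τ'⟩ h
    simp only at h
    have hk : k = k' := by
      have := congrArg (fun σ : Equiv.Perm (Fin (m+1)) => σ (Fin.last m)) h
      simpa using this
    subst hk
    refine Prod.ext rfl (Equiv.ext fun a => ?_)
    have := congrArg (fun σ : Equiv.Perm (Fin (m+1)) => σ a.castSucc) h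
    have h2 : k.succAbove (τ a) = k.succAbove (τ' a) := by simpa using this
    exact Fin.succAbove_right_injective h2
  · simp [Fintype.card_perm, Fintype.card_prod, Nat.factorial_succ]

lemma append_castSucc {α : Type*} {m : ℕ} (f : Fin m → α) (g : Fin 1 → α) (a : Fin m) :
    Fin.append f g a.castSucc = f a :=
  Fin.append_left f g a

lemma append_last {α : Type*} {m : ℕ} (f : Fin m → α) (g : Fin 1 → α) :
    Fin.append f g (Fin.last m) = g 0 := by
  have : Fin.last m = Fin.natAdd m (0 : Fin 1) := by ext; simp
  rw [this, Fin.append_right]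

/-- `epsCol q k = ∏_{v > k} (-q v k)`. -/
def epsCol {m : ℕ} (q : Matrix (Fin (m + 1)) (Fin (m + 1)) ℂ) (k : Fin (m + 1)) : ℂ :=
  ∏ v ∈ Finset.univ.filter (fun v => k < v), (-q v k)

lemma epsCol_ne_zero {m : ℕ} (q : Matrix (Fin (m + 1)) (Fin (m + 1)) ℂ)
    (hq : ∀ a b, q a b ≠ 0) (k : Fin (m + 1)) : epsCol q k ≠ 0 :=
  Finset.prod_ne_zero_iff.mpr fun v _ => neg_ne_zero.mpr (hq v k)

lemma manEps_insertLast {m : ℕ} (q : Matrix (Fin (m + 1)) (Fin (m + 1)) ℂ) (k : Fin (m + 1))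
    (τ : Equiv.Perm (Fin m)) :
    manEps q id (insertLast k τ) = epsCol q k * manEps q k.succAbove τ := by
  set σ := insertLast k τ with hσdef
  have hlast : σ (Fin.last m) = k := insertLast_last k τ
  have hcs : ∀ a : Fin m, σ a.castSucc = k.succAbove (τ a) := insertLast_castSucc k τ
  rw [manEps, ← Finset.prod_filter_mul_prod_filter_not _
    (fun st : Fin (m+1) × Fin (m+1) => st.2 = Fin.last m), Finset.filter_filter,
    Finset.filter_filter]
  congr 1
  · -- pairs with second coordinate `last`
    rw [epsCol]
    refine Finset.prod_bij' (fun st _ => σ st.1) (fun v _ => (σ⁻¹ v, Fin.last m))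
      ?_ ?_ ?_ ?_ ?_
    · intro st hst
      simp only [Finset.mem_filter, Finset.mem_univ, true_and] at hst ⊢
      obtain ⟨⟨h1, h2⟩, h3⟩ := hst
      rw [h3, hlast] at h2
      exact h2
    · intro v hv
      simp only [Finset.mem_filter, Finset.mem_univ, true_and] at hv ⊢
      refine ⟨⟨?_, ?_⟩, trivial⟩
      · rw [Fin.lt_last_iff_ne_last]
        intro hc
        rw [← hlast, ← hc, Equiv.Perm.inv_def, Equiv.apply_symm_apply] at hv
        exact lt_irrefl _ hv
      · rw [hlast, Equiv.Perm.inv_def, Equiv.apply_symm_apply]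
        exact hv
    · intro st hst
      simp only [Finset.mem_filter, Finset.mem_univ, true_and] at hst
      exact Prod.ext (σ.symm_apply_apply st.1) hst.2.symm
    · intro v _
      exact σ.apply_symm_apply v
    · intro st hst
      simp only [Finset.mem_filter, Finset.mem_univ, true_and] at hst
      rw [id_eq, id_eq, hst.2, hlast]
  · -- pairs with second coordinate not `last`
    rw [manEps]
    have hmem : ∀ st : Fin (m+1) × Fin (m+1), st ∈ Finset.univ.filter
        (fun st : Fin (m+1) × Fin (m+1) => (st.1 < st.2 ∧ σ st.2 < σ st.1) ∧
          ¬st.2 = Fin.last m) → st.1 ≠ Fin.last m ∧ st.2 ≠ Fin.last m := by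
      intro st hst
      simp only [Finset.mem_filter, Finset.mem_univ, true_and] at hst
      refine ⟨?_, hst.2⟩
      have h2 : st.2 < Fin.last m := Fin.lt_last_iff_ne_last.mpr hst.2
      exact Fin.lt_last_iff_ne_last.mp (lt_trans hst.1.1 h2)
    refine Finset.prod_bij'
      (fun st hst => (st.1.castPred (hmem st hst).1, st.2.castPred (hmem st hst).2))
      (fun ab _ => (ab.1.castSucc, ab.2.castSucc)) ?_ ?_ ?_ ?_ ?_
    · intro st hst
      have h0 := hmem st hst
      simp only [Finset.mem_filter, Finset.mem_univ, true_and] at hst ⊢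
      obtain ⟨⟨h1, h2⟩, _⟩ := hst
      constructor
      · rw [← Fin.castSucc_lt_castSucc_iff, Fin.castSucc_castPred, Fin.castSucc_castPred]
        exact h1
      · rw [← Fin.succAbove_lt_succAbove_iff (p := k), ← hcs, ← hcs,
          Fin.castSucc_castPred, Fin.castSucc_castPred]
        exact h2
    · intro ab hab
      simp only [Finset.mem_filter, Finset.mem_univ, true_and] at hab ⊢
      refine ⟨⟨?_, ?_⟩, (Fin.castSucc_lt_last ab.2).ne⟩
      · rw [Fin.castSucc_lt_castSucc_iff]; exact hab.1
      · rw [hcs, hcs, Fin.succAbove_lt_succAbove_iff]; exact hab.2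
    · intro st hst
      exact Prod.ext (Fin.castSucc_castPred st.1 (hmem st hst).1)
        (Fin.castSucc_castPred st.2 (hmem st hst).2)
    · intro ab hab
      exact Prod.ext (by simp) (by simp)
    · intro st hst
      have h0 := hmem st hst
      have e1 : k.succAbove (τ (st.1.castPred h0.1)) = σ st.1 := by
        rw [← hcs, Fin.castSucc_castPred]
      have e2 : k.succAbove (τ (st.2.castPred h0.2)) = σ st.2 := by
        rw [← hcs, Fin.castSucc_castPred]
      rw [id_eq, id_eq, ← e1, ← e2]

lemma manEpsIdx_append {m : ℕ} (q : Matrix (Fin (m + 1)) (Fin (m + 1)) ℂ) (i : Fin (m + 1)) :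
    manEpsIdx q (Fin.append (complOne i) ![i]) = epsCol q i := by
  set I : Fin (m + 1) → Fin (m + 1) := Fin.append (complOne i) ![i] with hI
  have hIc : ∀ a : Fin m, I a.castSucc = i.succAbove a := by
    intro a
    rw [hI, append_castSucc, complOne_eq_succAbove]
  have hIl : I (Fin.last m) = i := by
    rw [hI, append_last]
    rfl
  have hinj : Function.Injective I := by
    intro a b hab
    induction a using Fin.lastCases with
    | last =>
      induction b using Fin.lastCases with
      | last => rfl
      | cast b => rw [hIl, hIc] at hab; exact absurd hab.symm (Fin.succAbove_ne i b)
    | cast a =>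
      induction b using Fin.lastCases with
      | last => rw [hIl, hIc] at hab; exact absurd hab (Fin.succAbove_ne i a)
      | cast b =>
        rw [hIc, hIc] at hab
        rw [Fin.succAbove_right_injective hab]
  have hchar : ∀ st : Fin (m+1) × Fin (m+1), st ∈ Finset.univ.filter
      (fun st : Fin (m+1) × Fin (m+1) => st.1 < st.2 ∧ I st.2 < I st.1) →
      st.2 = Fin.last m ∧ i < I st.1 := by
    intro st hst
    simp only [Finset.mem_filter, Finset.mem_univ, true_and] at hst
    obtain ⟨h1, h2⟩ := hst
    by_cases hl : st.2 = Fin.last m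
    · refine ⟨hl, ?_⟩
      rw [hl, hIl] at h2
      exact h2
    · exfalso
      have hl1 : st.1 ≠ Fin.last m :=
        Fin.lt_last_iff_ne_last.mp (lt_trans h1 (Fin.lt_last_iff_ne_last.mpr hl))
      rw [← Fin.castSucc_castPred st.1 hl1, ← Fin.castSucc_castPred st.2 hl, hIc, hIc] at h2
      rw [Fin.succAbove_lt_succAbove_iff] at h2
      rw [← Fin.castSucc_castPred st.1 hl1, ← Fin.castSucc_castPred st.2 hl,
        Fin.castSucc_lt_castSucc_iff] at h1
      exact absurd h1 (not_lt.2 h2.le)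
  rw [manEpsIdx, if_pos hinj, epsCol]
  refine Finset.prod_bij (fun st _ => I st.1) ?_ ?_ ?_ ?_
  · intro st hst
    simp only [Finset.mem_filter, Finset.mem_univ, true_and]
    exact (hchar st hst).2
  · intro st hst st' hst' heq
    have h1 := hchar st hst
    have h2 := hchar st' hst'
    refine Prod.ext (hinj heq) ?_
    rw [h1.1, h2.1]
  · intro v hv
    simp only [Finset.mem_filter, Finset.mem_univ, true_and] at hv
    obtain ⟨a, ha⟩ := Fin.exists_succAbove_eq (Ne.symm (ne_of_lt hv))
    refine ⟨(a.castSucc, Fin.last m), ?_, ?_⟩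
    · simp only [Finset.mem_filter, Finset.mem_univ, true_and]
      refine ⟨Fin.castSucc_lt_last a, ?_⟩
      show I (Fin.last m) < I a.castSucc
      rw [hIl, hIc, ha]
      exact hv
    · show I a.castSucc = v
      rw [hIc, ha]
  · intro st hst
    rw [(hchar st hst).1, hIl]


lemma laplace {R : Type*} [Ring R] [Algebra ℂ R] {m : ℕ} (q : Matrix (Fin (m+1)) (Fin (m+1)) ℂ)
    (M : Matrix (Fin (m+1)) (Fin (m+1)) R) (J : Fin m → Fin (m+1)) (j : Fin (m+1)) :
    cdet q M id (Fin.append J ![j]) =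
      ∑ k, epsCol q k • (cdet q M k.succAbove J * M k j) := by
  have hbij := Fintype.sum_bijective
    (fun x : Fin (m+1) × Equiv.Perm (Fin m) => insertLast x.1 x.2)
    insertLast_bijective
    (fun x => manEps q id (insertLast x.1 x.2) •
      (List.ofFn fun a : Fin (m+1) =>
        M (id (insertLast x.1 x.2 a)) (Fin.append J ![j] a)).prod)
    (fun σ => manEps q id σ •
      (List.ofFn fun a : Fin (m+1) => M (id (σ a)) (Fin.append J ![j] a)).prod)
    (fun x => rfl)
  rw [cdet, ← hbij, Fintype.sum_prod_type]
  refine Finset.sum_congr rfl fun k _ => ?_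
  have hlist : ∀ τ : Equiv.Perm (Fin m),
      (List.ofFn fun a : Fin (m+1) =>
        M (id (insertLast k τ a)) (Fin.append J ![j] a)).prod =
      (List.ofFn fun a : Fin m => M (k.succAbove (τ a)) (J a)).prod * M k j := by
    intro τ
    rw [List.ofFn_succ', List.prod_concat]
    congr 1
    · refine congrArg List.prod (congrArg List.ofFn (funext fun a => ?_))
      rw [id_eq, insertLast_castSucc, append_castSucc]
    · rw [id_eq, insertLast_last, append_last]
      rfl
  calc ∑ τ : Equiv.Perm (Fin m), manEps q id (insertLast k τ) •
        (List.ofFn fun a : Fin (m+1) =>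
          M (id (insertLast k τ a)) (Fin.append J ![j] a)).prod
      = ∑ τ : Equiv.Perm (Fin m), epsCol q k •
          ((manEps q k.succAbove τ •
            (List.ofFn fun a : Fin m => M (k.succAbove (τ a)) (J a)).prod) * M k j) := by
        refine Finset.sum_congr rfl fun τ _ => ?_
        rw [manEps_insertLast, hlist τ, smul_mul_assoc, smul_smul]
    _ = epsCol q k • (cdet q M k.succAbove J * M k j) := by
        rw [← Finset.smul_sum, ← Finset.sum_mul]
        rfl

lemma manin_bracket {R : Type*} [Ring R] [Algebra ℂ R] {n m' : ℕ}
    {q : Matrix (Fin n) (Fin n) ℂ} {p : Matrix (Fin m') (Fin m') ℂ}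
    (hp : IsParametric p) {M : Matrix (Fin n) (Fin m') R} (hM : IsManin q p M)
    {i j : Fin n} (hij : i < j) (k l : Fin m') :
    M i k * M j l - q j i • (M j k * M i l) + p k l • (M i l * M j k)
      - (q j i * p k l) • (M j l * M i k) = 0 := by
  rcases lt_trichotomy k l with hkl | rfl | hkl
  · have h := hM.2 i j k l hij hkl
    rw [← h]
    abel
  · have h1 := hM.1 i j k hij
    rw [hp.2.2 k, one_smul, mul_one, h1]
    abel
  · have h := hM.2 i j l k hij hkl
    have h2 := congrArg (fun x => p k l • x) h
    simp only [smul_zero, smul_sub, smul_add, smul_smul] at h2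
    have hpp : p k l * p l k = 1 := hp.2.1 k l
    have e1 : p k l * (q j i * p l k) = q j i := by
      rw [mul_comm (q j i) (p l k), ← mul_assoc, hpp, one_mul]
    have e2 : p k l * p l k = 1 := hpp
    rw [e1, e2, one_smul] at h2
    rw [show q j i * p k l = p k l * q j i from mul_comm _ _]
    rw [← h2]
    abel

lemma sandwich {R : Type*} [Ring R] [Algebra ℂ R] (A B X1 X2 X3 X4 : R) (c d ε : ℂ)
    (h : X1 - c • X3 + d • X2 - (c * d) • X4 = 0) :
    (ε • (A * X1 * B) + d • (ε • (A * X2 * B)))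
      + (((-c) * ε) • (A * X3 * B) + d • (((-c) * ε) • (A * X4 * B))) = 0 := by
  have h0 : ε • (A * (X1 - c • X3 + d • X2 - (c * d) • X4) * B) = 0 := by
    rw [h, mul_zero, zero_mul, smul_zero]
  calc (ε • (A * X1 * B) + d • (ε • (A * X2 * B)))
      + (((-c) * ε) • (A * X3 * B) + d • (((-c) * ε) • (A * X4 * B)))
      = ε • (A * (X1 - c • X3 + d • X2 - (c * d) • X4) * B) := by
        simp only [mul_add, mul_sub, add_mul, sub_mul, mul_smul_comm, smul_mul_assoc,
          smul_add, smul_sub, smul_smul]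
        module
    _ = 0 := h0

lemma cdet_swap {R : Type*} [Ring R] [Algebra ℂ R] {n m' r : ℕ}
    {q : Matrix (Fin n) (Fin n) ℂ} {p : Matrix (Fin m') (Fin m') ℂ}
    (hp : IsParametric p) {M : Matrix (Fin n) (Fin m') R} (hM : IsManin q p M)
    {I : Fin r → Fin n} (hI : StrictMono I) (J : Fin r → Fin m') (s t : Fin r)
    (hst : (s : ℕ) + 1 = (t : ℕ)) :
    cdet q M I J = (-(p (J s) (J t))) • cdet q M I (J ∘ ⇑(Equiv.swap s t)) := by
  have htr : (t : ℕ) < r := t.isLt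
  have hsr : (s : ℕ) + 1 < r := by omega
  have hsne : s ≠ t := fun hh => by rw [hh] at hst; omega
  set T := Equiv.swap s t with hT
  have hTs : T s = t := Equiv.swap_apply_left s t
  have hTt : T t = s := Equiv.swap_apply_right s t
  set F : Equiv.Perm (Fin r) → R := fun σ =>
    manEps q I σ • (List.ofFn fun a => M (I (σ a)) (J a)).prod
      + p (J s) (J t) • (manEps q I σ • (List.ofFn fun a => M (I (σ a)) ((J ∘ ⇑T) a)).prod)
    with hF
  suffices hsum : (∑ σ : Equiv.Perm (Fin r), F σ) = 0 by
    have hsum2 : cdet q M I J + p (J s) (J t) • cdet q M I (J ∘ ⇑T) = 0 := by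
      rw [cdet, cdet, Finset.smul_sum, ← Finset.sum_add_distrib]
      exact hsum
    rw [neg_smul]
    exact eq_neg_of_add_eq_zero_left hsum2
  have key : ∀ σ : Equiv.Perm (Fin r), σ s < σ t → F σ + F (σ * T) = 0 := by
    intro σ hlt
    have hij : I (σ s) < I (σ t) := hI hlt
    -- abbreviations
    set k' := J s with hk'
    set l' := J t with hl'
    set A := ((List.ofFn fun a => M (I (σ a)) (J a)).take (s : ℕ)).prod with hA
    set B := ((List.ofFn fun a => M (I (σ a)) (J a)).drop ((s : ℕ) + 2)).prod with hB
    have hfs : ∀ (K : Fin r → Fin m') (ρ : Equiv.Perm (Fin r)),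
        (List.ofFn fun a => M (I (ρ a)) (K a)).prod =
          ((List.ofFn fun a => M (I (ρ a)) (K a)).take (s : ℕ)).prod *
            (M (I (ρ s)) (K s) * M (I (ρ t)) (K t)) *
            ((List.ofFn fun a => M (I (ρ a)) (K a)).drop ((s : ℕ) + 2)).prod := by
      intro K ρ
      have e1 : (⟨(s : ℕ), by omega⟩ : Fin r) = s := by ext; rfl
      have e2 : (⟨(s : ℕ) + 1, by omega⟩ : Fin r) = t := by ext; simp [hst]
      rw [ofFn_prod_split (fun a => M (I (ρ a)) (K a)) (s : ℕ) hsr, e1, e2]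
    have hKJ : ∀ a : Fin r, a ≠ s → a ≠ t → (J ∘ ⇑T) a = J a := by
      intro a h1 h2
      simp only [Function.comp_apply, hT, Equiv.swap_apply_of_ne_of_ne h1 h2]
    have hρσ : ∀ a : Fin r, a ≠ s → a ≠ t → (σ * T) a = σ a := by
      intro a h1 h2
      simp only [Equiv.Perm.mul_apply, hT, Equiv.swap_apply_of_ne_of_ne h1 h2]
    have hne_of_lt : ∀ a : Fin r, (a : ℕ) < (s : ℕ) → a ≠ s ∧ a ≠ t := by
      intro a ha
      constructor <;> (intro hh; rw [hh] at ha; omega)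
    have hne_of_ge : ∀ a : Fin r, (s : ℕ) + 2 ≤ (a : ℕ) → a ≠ s ∧ a ≠ t := by
      intro a ha
      constructor <;> (intro hh; rw [hh] at ha; omega)
    have htake : ∀ (K : Fin r → Fin m') (hK : ∀ a, a ≠ s → a ≠ t → K a = J a)
        (ρ : Equiv.Perm (Fin r)) (hρ : ∀ a, a ≠ s → a ≠ t → ρ a = σ a),
        ((List.ofFn fun a => M (I (ρ a)) (K a)).take (s : ℕ)) =
          ((List.ofFn fun a => M (I (σ a)) (J a)).take (s : ℕ)) := by
      intro K hK ρ hρ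
      apply take_ofFn_congr
      intro a ha
      obtain ⟨h1, h2⟩ := hne_of_lt a ha
      rw [hK a h1 h2, hρ a h1 h2]
    have hdrop : ∀ (K : Fin r → Fin m') (hK : ∀ a, a ≠ s → a ≠ t → K a = J a)
        (ρ : Equiv.Perm (Fin r)) (hρ : ∀ a, a ≠ s → a ≠ t → ρ a = σ a),
        ((List.ofFn fun a => M (I (ρ a)) (K a)).drop ((s : ℕ) + 2)) =
          ((List.ofFn fun a => M (I (σ a)) (J a)).drop ((s : ℕ) + 2)) := by
      intro K hK ρ hρ
      apply drop_ofFn_congr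
      intro a ha
      obtain ⟨h1, h2⟩ := hne_of_ge a ha
      rw [hK a h1 h2, hρ a h1 h2]
    -- the four product identities
    have hP1 : (List.ofFn fun a => M (I (σ a)) (J a)).prod
        = A * (M (I (σ s)) k' * M (I (σ t)) l') * B := hfs J σ
    have hP2 : (List.ofFn fun a => M (I ((σ * T) a)) (J a)).prod
        = A * (M (I (σ t)) k' * M (I (σ s)) l') * B := by
      rw [hfs J (σ * T), htake J (fun a _ _ => rfl) (σ * T) hρσ,
        hdrop J (fun a _ _ => rfl) (σ * T) hρσ]
      rw [show (σ * T) s = σ t by rw [Equiv.Perm.mul_apply, hTs],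
        show (σ * T) t = σ s by rw [Equiv.Perm.mul_apply, hTt]]
    have hP3 : (List.ofFn fun a => M (I (σ a)) ((J ∘ ⇑T) a)).prod
        = A * (M (I (σ s)) l' * M (I (σ t)) k') * B := by
      rw [hfs (J ∘ ⇑T) σ, htake (J ∘ ⇑T) hKJ σ (fun a _ _ => rfl),
        hdrop (J ∘ ⇑T) hKJ σ (fun a _ _ => rfl)]
      rw [show (J ∘ ⇑T) s = l' by simp only [Function.comp_apply, hTs, hl'],
        show (J ∘ ⇑T) t = k' by simp only [Function.comp_apply, hTt, hk']]
    have hP4 : (List.ofFn fun a => M (I ((σ * T) a)) ((J ∘ ⇑T) a)).prod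
        = A * (M (I (σ t)) l' * M (I (σ s)) k') * B := by
      rw [hfs (J ∘ ⇑T) (σ * T), htake (J ∘ ⇑T) hKJ (σ * T) hρσ,
        hdrop (J ∘ ⇑T) hKJ (σ * T) hρσ]
      rw [show (σ * T) s = σ t by rw [Equiv.Perm.mul_apply, hTs],
        show (σ * T) t = σ s by rw [Equiv.Perm.mul_apply, hTt]]
      rw [show (J ∘ ⇑T) s = l' by simp only [Function.comp_apply, hTs, hl'],
        show (J ∘ ⇑T) t = k' by simp only [Function.comp_apply, hTt, hk']]
    have hε : manEps q I (σ * T) = (-q (I (σ t)) (I (σ s))) * manEps q I σ :=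
      manEps_mul_swap q I σ s t hst hlt
    rw [hF]
    simp only []
    rw [hP1, hP2, hP3, hP4, hε]
    exact sandwich A B (M (I (σ s)) k' * M (I (σ t)) l') (M (I (σ s)) l' * M (I (σ t)) k')
      (M (I (σ t)) k' * M (I (σ s)) l') (M (I (σ t)) l' * M (I (σ s)) k')
      (q (I (σ t)) (I (σ s))) (p k' l') (manEps q I σ)
      (manin_bracket hp hM hij k' l')
  have key' : ∀ σ : Equiv.Perm (Fin r), F σ + F (σ * T) = 0 := by
    intro σ
    rcases lt_trichotomy (σ s) (σ t) with h | h | h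
    · exact key σ h
    · exact absurd (σ.injective h) hsne
    · have h2 := key (σ * T) (by
        rw [Equiv.Perm.mul_apply, Equiv.Perm.mul_apply, hTs, hTt]; exact h)
      rw [show σ * T * T = σ by rw [mul_assoc, hT, Equiv.swap_mul_self, mul_one]] at h2
      rw [add_comm]
      exact h2
  have hre : (∑ σ : Equiv.Perm (Fin r), F (σ * T)) = ∑ σ : Equiv.Perm (Fin r), F σ :=
    Fintype.sum_equiv (Equiv.mulRight T) _ _ (fun σ => rfl)
  have hdouble : (∑ σ : Equiv.Perm (Fin r), F σ) + (∑ σ : Equiv.Perm (Fin r), F σ) = 0 := by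
    nth_rewrite 2 [← hre]
    rw [← Finset.sum_add_distrib]
    exact Finset.sum_eq_zero fun σ _ => key' σ
  exact cancel_two hdouble

lemma cdet_repeat {R : Type*} [Ring R] [Algebra ℂ R] {n m' r : ℕ}
    {q : Matrix (Fin n) (Fin n) ℂ} {p : Matrix (Fin m') (Fin m') ℂ}
    (hp : IsParametric p) {M : Matrix (Fin n) (Fin m') R} (hM : IsManin q p M)
    {I : Fin r → Fin n} (hI : StrictMono I) :
    ∀ (d : ℕ) (J : Fin r → Fin m') (s t : Fin r),
      (t : ℕ) = (s : ℕ) + 1 + d → J s = J t → cdet q M I J = 0 := by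
  intro d
  induction d with
  | zero =>
    intro J s t hts hJ
    have h := cdet_swap hp hM hI J s t (by omega)
    have hfix : J ∘ ⇑(Equiv.swap s t) = J := by
      funext a
      rcases eq_or_ne a s with rfl | h1
      · simp only [Function.comp_apply, Equiv.swap_apply_left]
        exact hJ.symm
      rcases eq_or_ne a t with rfl | h2
      · simp only [Function.comp_apply, Equiv.swap_apply_right]
        exact hJ
      · simp only [Function.comp_apply, Equiv.swap_apply_of_ne_of_ne h1 h2]
    rw [hfix, hJ, hp.2.2 (J t)] at h
    have h2 : cdet q M I J + cdet q M I J = 0 := by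
      nth_rewrite 1 [h]
      rw [neg_one_smul, neg_add_cancel]
    exact cancel_two h2
  | succ d ih =>
    intro J s t hts hJ
    have htr : (t : ℕ) < r := t.isLt
    set u : Fin r := ⟨(s : ℕ) + 1, by omega⟩ with hu
    have h := cdet_swap hp hM hI J s u (by rw [hu])
    have h2 : cdet q M I (J ∘ ⇑(Equiv.swap s u)) = 0 := by
      apply ih (J ∘ ⇑(Equiv.swap s u)) u t
        (by show (t : ℕ) = (s : ℕ) + 1 + 1 + d; omega)
      have hts' : t ≠ s := fun hh => by rw [hh] at hts; omega
      have htu : t ≠ u := by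
        intro hh
        rw [hh] at hts
        have he : (u : ℕ) = (s : ℕ) + 1 := rfl
        omega
      simp only [Function.comp_apply, Equiv.swap_apply_right,
        Equiv.swap_apply_of_ne_of_ne hts' htu]
      exact hJ.symm ▸ hJ.symm
    rw [h, h2, smul_zero]

def Kf {m : ℕ} (i c : Fin (m + 1)) : Fin (m + 1) → Fin (m + 1) := fun a =>
  if h : (a : ℕ) < (c : ℕ) then
    (if (a : ℕ) < (i : ℕ) then a else ⟨(a : ℕ) + 1, by have := c.isLt; omega⟩)
  else if a = c then i else a

lemma Kf_val {m : ℕ} (i c : Fin (m + 1)) (a : Fin (m + 1)) :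
    ((Kf i c a : Fin (m + 1)) : ℕ) =
      if (a : ℕ) < (c : ℕ) then (if (a : ℕ) < (i : ℕ) then (a : ℕ) else (a : ℕ) + 1)
      else if (a : ℕ) = (c : ℕ) then (i : ℕ) else (a : ℕ) := by
  rw [Kf]
  split_ifs with h1 h2 h3 h4 h5 <;> simp_all [Fin.ext_iff]

lemma Kf_self {m : ℕ} (i : Fin (m + 1)) : Kf i i = id := by
  funext a
  apply Fin.ext
  rw [Kf_val, id_eq]
  split_ifs <;> omega

lemma val_succAbove {m : ℕ} (i : Fin (m + 1)) (a : Fin m) :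
    ((i.succAbove a : Fin (m + 1)) : ℕ) =
      if (a : ℕ) < (i : ℕ) then (a : ℕ) else (a : ℕ) + 1 := by
  rcases lt_or_ge (a.castSucc) i with h | h
  · rw [Fin.succAbove_of_castSucc_lt _ _ h, if_pos]
    · rfl
    · rw [Fin.lt_def] at h
      exact h
  · rw [Fin.succAbove_of_le_castSucc _ _ h, if_neg, Fin.val_succ]
    rw [Fin.le_def] at h
    rw [Fin.coe_castSucc] at h
    omega

lemma Kf_last {m : ℕ} (i : Fin (m + 1)) :
    Fin.append (complOne i) ![i] = Kf i (Fin.last m) := by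
  funext a
  induction a using Fin.lastCases with
  | last =>
    apply Fin.ext
    rw [append_last, Kf_val]
    simp
  | cast a =>
    apply Fin.ext
    rw [append_castSucc, complOne_eq_succAbove, val_succAbove, Kf_val]
    have : ((a.castSucc : Fin (m + 1)) : ℕ) = (a : ℕ) := rfl
    rw [this]
    have hlt : (a : ℕ) < ((Fin.last m : Fin (m + 1)) : ℕ) := by
      rw [Fin.val_last]
      exact a.isLt
    rw [if_pos hlt]

lemma Kf_swap {m : ℕ} (i : Fin (m + 1)) (c : ℕ) (hic : (i : ℕ) ≤ c) (hc : c < m) :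
    Kf i ⟨c + 1, by omega⟩ ∘
      ⇑(Equiv.swap (⟨c, by omega⟩ : Fin (m + 1)) ⟨c + 1, by omega⟩) = Kf i ⟨c, by omega⟩ := by
  have hsw : ∀ a : Fin (m + 1),
      ((Equiv.swap (⟨c, by omega⟩ : Fin (m + 1)) ⟨c + 1, by omega⟩ a : Fin (m + 1)) : ℕ) =
        if (a : ℕ) = c then c + 1 else if (a : ℕ) = c + 1 then c else (a : ℕ) := by
    intro a
    rw [Equiv.swap_apply_def]
    split_ifs <;> simp_all [Fin.ext_iff]
  funext a
  apply Fin.ext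
  rw [Function.comp_apply, Kf_val, Kf_val, hsw a]
  have hai := a.isLt
  simp only [Fin.val_mk]
  split_ifs <;> omega

lemma cdet_Kf {R : Type*} [Ring R] [Algebra ℂ R] {m : ℕ}
    {q p : Matrix (Fin (m + 1)) (Fin (m + 1)) ℂ}
    (hp : IsParametric p) {M : Matrix (Fin (m + 1)) (Fin (m + 1)) R} (hM : IsManin q p M)
    (i : Fin (m + 1)) :
    ∀ (d : ℕ) (hd : (i : ℕ) + d ≤ m),
      cdet q M id (Kf i ⟨(i : ℕ) + d, Nat.lt_succ_of_le hd⟩) =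
        (∏ v ∈ Finset.Ioc i ⟨(i : ℕ) + d, Nat.lt_succ_of_le hd⟩, (-p v i)) •
          cdet q M (id : Fin (m + 1) → Fin (m + 1)) id := by
  intro d
  induction d with
  | zero =>
    intro hd
    have h0 : (⟨(i : ℕ) + 0, Nat.lt_succ_of_le hd⟩ : Fin (m + 1)) = i := by ext; simp
    rw [h0, Kf_self, Finset.Ioc_self, Finset.prod_empty, one_smul]
  | succ d ih =>
    intro hd
    have hd' : (i : ℕ) + d ≤ m := by omega
    set c : Fin (m + 1) := ⟨(i : ℕ) + d, Nat.lt_succ_of_le hd'⟩ with hcdef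
    set c' : Fin (m + 1) := ⟨(i : ℕ) + d + 1, Nat.lt_succ_of_le hd⟩ with hc'def
    have hcc' : (c : ℕ) + 1 = (c' : ℕ) := rfl
    have hswap := cdet_swap hp hM (strictMono_id (α := Fin (m + 1))) (Kf i c') c c' hcc'
    have hv1 : Kf i c' c = c' := by
      apply Fin.ext
      rw [Kf_val]
      simp only [hcdef, hc'def]
      split_ifs <;> omega
    have hv2 : Kf i c' c' = i := by
      apply Fin.ext
      rw [Kf_val]
      simp only [hcdef, hc'def]
      split_ifs <;> omega
    have hcomp : Kf i c' ∘ ⇑(Equiv.swap c c') = Kf i c := by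
      have := Kf_swap i ((i : ℕ) + d) (by omega) (by omega)
      exact this
    have hE : (⟨(i : ℕ) + (d + 1), Nat.lt_succ_of_le hd⟩ : Fin (m + 1)) = c' := by
      apply Fin.ext
      rfl
    rw [hE, hswap, hv1, hv2, hcomp, ih hd', smul_smul]
    congr 1
    have hnotmem : c' ∉ Finset.Ioc i c := by
      simp only [Finset.mem_Ioc]
      intro hcon
      have := hcon.2
      rw [Fin.le_def] at this
      simp only [hcdef, hc'def] at this
      omega
    have hins : Finset.Ioc i c' = insert c' (Finset.Ioc i c) := by
      ext v
      simp only [Finset.mem_Ioc, Finset.mem_insert, Fin.lt_def, Fin.le_def, Fin.ext_iff,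
        hcdef, hc'def, Fin.val_mk]
      omega
    rw [hins, Finset.prod_insert hnotmem]

lemma cdet_append_compl {R : Type*} [Ring R] [Algebra ℂ R] {m : ℕ}
    {q p : Matrix (Fin (m + 1)) (Fin (m + 1)) ℂ}
    (hp : IsParametric p) {M : Matrix (Fin (m + 1)) (Fin (m + 1)) R} (hM : IsManin q p M)
    (i : Fin (m + 1)) :
    cdet q M id (Fin.append (complOne i) ![i]) = epsCol p i • cdet q M id id := by
  have h := cdet_Kf hp hM i (m - (i : ℕ)) (by omega)
  have hlast : (⟨(i : ℕ) + (m - (i : ℕ)), Nat.lt_succ_of_le (by omega)⟩ : Fin (m + 1))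
      = Fin.last m := by
    ext
    simp only [Fin.val_last]
    omega
  rw [hlast] at h
  rw [Kf_last i, h]
  congr 1
  apply Finset.prod_congr _ (fun _ _ => rfl)
  ext v
  simp only [Finset.mem_Ioc, Finset.mem_filter, Finset.mem_univ, true_and]
  exact ⟨fun hh => hh.1, fun hh => ⟨hh, Fin.le_last v⟩⟩

end ManinAux


/-- Inverse of a Manin matrix: the matrix `N` with entries
`N_{ij} = ε(p̂, i^c⊕(i))⁻¹ ε(q̂, j^c⊕(j)) cdet_{q̂}(M)⁻¹ cdet_{q̂}(M_{j^c i^c})`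
satisfies `N M = 1`, and any two-sided inverse of `M` equals `N`. -/
theorem manin_inverse {R : Type*} [Ring R] [Algebra ℂ R] {n : ℕ}
    (q p : Matrix (Fin n) (Fin n) ℂ) (hq : IsParametric q) (hp : IsParametric p)
    (M : Matrix (Fin n) (Fin n) R) (hM : IsManin q p M)
    (d : R) (hd : d * cdet q M id id = 1 ∧ cdet q M id id * d = 1)
    (N : Matrix (Fin n) (Fin n) R)
    (hN : ∀ i j, N i j =
      ((manEpsIdx p (Fin.append (complOne i) ![i]))⁻¹
          * manEpsIdx q (Fin.append (complOne j) ![j])) •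
        (d * cdet q M (complOne j) (complOne i))) :
    N * M = 1 ∧ ∀ M' : Matrix (Fin n) (Fin n) R, M * M' = 1 → M' * M = 1 → M' = N := by
  have key : N * M = 1 := by
    cases n with
    | zero =>
      ext i j
      exact i.elim0
    | succ m =>
      ext i j
      rw [Matrix.mul_apply]
      have hfun : ∀ k : Fin (m + 1), (complOne k : Fin m → Fin (m + 1)) = k.succAbove :=
        fun k => funext fun a => ManinAux.complOne_eq_succAbove k a
      have hsum : (∑ k, ManinAux.epsCol q k • (cdet q M (complOne k) (complOne i) * M k j))
          = cdet q M id (Fin.append (complOne i) ![j]) := by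
        rw [ManinAux.laplace q M (complOne i) j]
        refine Finset.sum_congr rfl fun k _ => ?_
        rw [hfun k]
      have hstep : (∑ k, N i k * M k j) =
          (manEpsIdx p (Fin.append (complOne i) ![i]))⁻¹ •
            (d * ∑ k, ManinAux.epsCol q k • (cdet q M (complOne k) (complOne i) * M k j)) := by
        rw [Finset.mul_sum, Finset.smul_sum]
        refine Finset.sum_congr rfl fun k _ => ?_
        rw [hN i k, smul_mul_assoc, ManinAux.manEpsIdx_append q k, mul_assoc, mul_smul_comm,
          smul_smul]
      rw [hstep, hsum]
      rcases eq_or_ne i j with rfl | hij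
      · rw [ManinAux.cdet_append_compl hp hM i, mul_smul_comm, smul_smul,
          ManinAux.manEpsIdx_append p i,
          inv_mul_cancel₀ (ManinAux.epsCol_ne_zero p hp.1 i), one_smul, hd.1,
          Matrix.one_apply_eq]
      · obtain ⟨a, ha⟩ := Fin.exists_succAbove_eq (Ne.symm hij)
        have hrep : cdet q M id (Fin.append (complOne i) ![j]) = 0 := by
          refine ManinAux.cdet_repeat hp hM strictMono_id (m - (a : ℕ) - 1)
            (Fin.append (complOne i) ![j]) a.castSucc (Fin.last m) ?_ ?_
          · rw [Fin.val_last, Fin.coe_castSucc]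
            have := a.isLt
            omega
          · rw [ManinAux.append_castSucc, ManinAux.append_last,
              ManinAux.complOne_eq_succAbove, ha]
            rfl
        rw [hrep, mul_zero, smul_zero, Matrix.one_apply_ne hij]
  refine ⟨key, fun M' h1 h2 => ?_⟩
  calc M' = 1 * M' := (one_mul M').symm
    _ = N * M * M' := by rw [key]
    _ = N * (M * M') := Matrix.mul_assoc N M M'
    _ = N * 1 := by rw [h1]
    _ = N := Matrix.mul_one N
end
end

section
/- Let M be an n×m (q̂,p̂)-Manin matrix over R. Then for every k≥1, the following identities of matrices over R (linear maps (ℂ^m)^{⊗k}→(ℂ^n)^{⊗k} with entries in R) hold: A_{q̂}^{(k)} M_1 ⋯ M_k = A_{q̂}^{(k)} M_1 ⋯ M_k A_{p̂}^{(k)} and M_1 ⋯ M_k S_{p̂}^{(k)} = S_{q̂}^{(k)} M_1 ⋯ M_k S_{p̂}^{(k)}. -/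
open scoped BigOperators Classical

noncomputable section

/-- The operator `P_{q̂}^σ` on `(ℂ^n)^{⊗k}`: the image of `σ ∈ S_k` under the action
generated by `(a,a+1) ↦ P_{q̂}` in adjacent tensor factors; explicitly
`P_{q̂}^σ e_{b_1}⊗⋯⊗e_{b_k} = (∏_{s<t, σ(s)>σ(t)} q_{b_s b_t}) e_{b_{σ⁻¹(1)}}⊗⋯⊗e_{b_{σ⁻¹(k)}}`. -/
def permMat {n k : ℕ} (q : Matrix (Fin n) (Fin n) ℂ) (σ : Equiv.Perm (Fin k)) :
    Matrix (Fin k → Fin n) (Fin k → Fin n) ℂ :=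
  Matrix.of fun a b =>
    if a = b ∘ ⇑σ⁻¹ then
      ∏ st ∈ Finset.univ.filter (fun st : Fin k × Fin k => st.1 < st.2 ∧ σ st.2 < σ st.1),
        q (b st.1) (b st.2)
    else 0

/-- The normalized `q̂`-symmetrizer `S_{q̂}^{(k)} = (1/k!) ∑_{σ∈S_k} P_{q̂}^σ`. -/
def manSym (n k : ℕ) (q : Matrix (Fin n) (Fin n) ℂ) :
    Matrix (Fin k → Fin n) (Fin k → Fin n) ℂ :=
  ((k.factorial : ℂ))⁻¹ • ∑ σ : Equiv.Perm (Fin k), permMat q σ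

/-- The normalized `q̂`-antisymmetrizer `A_{q̂}^{(k)} = (1/k!) ∑_{σ∈S_k} sgn(σ) P_{q̂}^σ`. -/
def manAsym (n k : ℕ) (q : Matrix (Fin n) (Fin n) ℂ) :
    Matrix (Fin k → Fin n) (Fin k → Fin n) ℂ :=
  ((k.factorial : ℂ))⁻¹ •
    ∑ σ : Equiv.Perm (Fin k), ((Equiv.Perm.sign σ : ℤ) : ℂ) • permMat q σ

/-- `M_1 M_2 ⋯ M_k : (ℂ^m)^{⊗k} → (ℂ^n)^{⊗k}`, a matrix over `R`, where `M_a` is `M`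
acting in the `a`-th tensor factor. -/
def tensorPow {R : Type*} [Ring R] {n m : ℕ} (M : Matrix (Fin n) (Fin m) R) (k : ℕ) :
    Matrix (Fin k → Fin n) (Fin k → Fin m) R :=
  Matrix.of fun a b => (List.ofFn fun i : Fin k => M (a i) (b i)).prod

/-! ### Auxiliary lemmas -/

/-- The coefficient appearing in `permMat`. -/
def manC {n k : ℕ} (q : Matrix (Fin n) (Fin n) ℂ) (σ : Equiv.Perm (Fin k))
    (b : Fin k → Fin n) : ℂ :=
  ∏ st ∈ Finset.univ.filter (fun st : Fin k × Fin k => st.1 < st.2 ∧ σ st.2 < σ st.1),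
    q (b st.1) (b st.2)

lemma permMat_apply {n k : ℕ} (q : Matrix (Fin n) (Fin n) ℂ) (σ : Equiv.Perm (Fin k))
    (a b : Fin k → Fin n) :
    permMat q σ a b = if a = b ∘ ⇑σ⁻¹ then manC q σ b else 0 := rfl

lemma manC_eq {n k : ℕ} (q : Matrix (Fin n) (Fin n) ℂ) (σ : Equiv.Perm (Fin k))
    (b : Fin k → Fin n) :
    manC q σ b = ∏ st ∈ Finset.univ.filter (fun st : Fin k × Fin k => st.1 < st.2),
      (if σ st.2 < σ st.1 then q (b st.1) (b st.2) else 1) := by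
  rw [manC, ← Finset.prod_filter, Finset.filter_filter]

lemma manC_one {n k : ℕ} (q : Matrix (Fin n) (Fin n) ℂ) (b : Fin k → Fin n) :
    manC q 1 b = 1 := by
  rw [manC_eq]
  refine Finset.prod_eq_one fun e he => ?_
  simp only [Finset.mem_filter] at he
  simp only [Equiv.Perm.one_apply]
  exact if_neg (not_lt.mpr he.2.le)

lemma permMat_one {n k : ℕ} (q : Matrix (Fin n) (Fin n) ℂ) :
    permMat q (1 : Equiv.Perm (Fin k)) = 1 := by
  ext a b
  rw [permMat_apply, manC_one]
  simp [Matrix.one_apply, funext_iff, eq_comm]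

lemma manC_mul {n k : ℕ} {q : Matrix (Fin n) (Fin n) ℂ} (hq : ∀ i j, q i j * q j i = 1)
    (σ τ : Equiv.Perm (Fin k)) (b : Fin k → Fin n) :
    manC q (σ * τ) b = manC q σ (b ∘ ⇑τ⁻¹) * manC q τ b := by
  rw [manC_eq, manC_eq, manC_eq]
  have key : ∏ st ∈ Finset.univ.filter (fun st : Fin k × Fin k => st.1 < st.2),
      (if σ st.2 < σ st.1 then (b ∘ ⇑τ⁻¹) st.1 |> q <| (b ∘ ⇑τ⁻¹) st.2 else 1)
    = ∏ st ∈ Finset.univ.filter (fun st : Fin k × Fin k => st.1 < st.2),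
      (if σ (if τ st.1 < τ st.2 then (τ st.1, τ st.2) else (τ st.2, τ st.1)).2
          < σ (if τ st.1 < τ st.2 then (τ st.1, τ st.2) else (τ st.2, τ st.1)).1 then
          q (b (τ⁻¹ (if τ st.1 < τ st.2 then (τ st.1, τ st.2) else (τ st.2, τ st.1)).1))
            (b (τ⁻¹ (if τ st.1 < τ st.2 then (τ st.1, τ st.2) else (τ st.2, τ st.1)).2))
        else 1) := by
    refine (Finset.prod_nbij'
      (fun e => if τ e.1 < τ e.2 then (τ e.1, τ e.2) else (τ e.2, τ e.1))
      (fun e => if τ⁻¹ e.1 < τ⁻¹ e.2 then (τ⁻¹ e.1, τ⁻¹ e.2) else (τ⁻¹ e.2, τ⁻¹ e.1))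
      ?_ ?_ ?_ ?_ ?_).symm
    · intro e he
      simp only [Finset.mem_filter, Finset.mem_univ, true_and] at he ⊢
      have hne : τ e.1 ≠ τ e.2 := fun h => absurd (τ.injective h) he.ne
      rcases hne.lt_or_gt with h | h <;> simp [h, h.not_gt]
    · intro e he
      simp only [Finset.mem_filter, Finset.mem_univ, true_and] at he ⊢
      have hne : τ⁻¹ e.1 ≠ τ⁻¹ e.2 := fun h => absurd (τ⁻¹.injective h) he.ne
      rcases hne.lt_or_gt with h | h <;> simp only [Equiv.Perm.inv_def] at h <;> simp [h, h.not_gt]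
    · intro e he
      simp only [Finset.mem_filter, Finset.mem_univ, true_and] at he
      have hne : τ e.1 ≠ τ e.2 := fun h => absurd (τ.injective h) he.ne
      rcases hne.lt_or_gt with h | h <;>
        simp [h, h.not_gt, he, he.not_gt, Prod.ext_iff]
    · intro e he
      simp only [Finset.mem_filter, Finset.mem_univ, true_and] at he
      have hne : τ⁻¹ e.1 ≠ τ⁻¹ e.2 := fun h => absurd (τ⁻¹.injective h) he.ne
      rcases hne.lt_or_gt with h | h <;> simp only [Equiv.Perm.inv_def] at h <;>
        simp [h, h.not_gt, he, he.not_gt, Prod.ext_iff]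
    · intro e _; rfl
  rw [key, ← Finset.prod_mul_distrib]
  refine Finset.prod_congr rfl fun e he => ?_
  simp only [Finset.mem_filter, Finset.mem_univ, true_and] at he
  have hne : τ e.1 ≠ τ e.2 := fun h => absurd (τ.injective h) he.ne
  simp only [Equiv.Perm.mul_apply]
  rcases hne.lt_or_gt with h | h
  · rw [if_pos h]
    simp only [Equiv.Perm.inv_def, Equiv.symm_apply_apply]
    rw [if_neg h.not_gt, mul_one]
    exact rfl
  · rw [if_neg h.not_gt]
    simp only [Equiv.Perm.inv_def, Equiv.symm_apply_apply]
    rw [if_pos h]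
    rcases lt_trichotomy (σ (τ e.1)) (σ (τ e.2)) with h' | h' | h'
    · simp only [h', h'.not_gt, if_true, if_false, hq]
    · exact absurd (σ.injective h') hne
    · simp only [h', h'.not_gt, if_true, if_false, one_mul]

lemma permMat_mul {n k : ℕ} {q : Matrix (Fin n) (Fin n) ℂ} (hq : ∀ i j, q i j * q j i = 1)
    (σ τ : Equiv.Perm (Fin k)) :
    permMat q (σ * τ) = permMat q σ * permMat q τ := by
  ext a b
  rw [Matrix.mul_apply]
  simp only [permMat_apply]
  rw [Finset.sum_eq_single (b ∘ ⇑τ⁻¹)]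
  · rw [if_pos rfl, manC_mul hq]
    have hcomp : (a = b ∘ ⇑(σ * τ)⁻¹) ↔ (a = (b ∘ ⇑τ⁻¹) ∘ ⇑σ⁻¹) := by
      constructor <;> intro h <;> rw [h] <;> ext x <;> simp [Equiv.Perm.mul_apply]
    by_cases h : a = b ∘ ⇑(σ * τ)⁻¹
    · rw [if_pos h, if_pos (hcomp.mp h), mul_comm]
    · rw [if_neg h, if_neg (fun hh => h (hcomp.mpr hh)), zero_mul]
  · intro c _ hc
    rw [if_neg (Ne.symm hc ∘ Eq.symm), mul_zero]
  · simp

lemma swap_filter {k : ℕ} (a a' : Fin k) (ha : (a:ℕ) + 1 = (a':ℕ)) :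
    (Finset.univ.filter (fun st : Fin k × Fin k =>
      st.1 < st.2 ∧ Equiv.swap a a' st.2 < Equiv.swap a a' st.1)) = {(a, a')} := by
  have haa : (a:ℕ) < (a':ℕ) := by omega
  ext st
  simp only [Finset.mem_filter, Finset.mem_univ, true_and, Finset.mem_singleton,
    Prod.ext_iff]
  constructor
  · rintro ⟨h1, h2⟩
    by_cases hs1 : st.1 = a
    · by_cases ht2 : st.2 = a'
      · exact ⟨hs1, ht2⟩
      · exfalso
        have ht1 : st.2 ≠ a := by
          intro h; rw [hs1, h] at h1; exact lt_irrefl _ h1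
        rw [hs1, Equiv.swap_apply_left, Equiv.swap_apply_of_ne_of_ne ht1 ht2] at h2
        rw [hs1] at h1
        rw [Fin.lt_def] at h1 h2
        omega
    · by_cases hs2 : st.1 = a'
      · exfalso
        have ht1 : st.2 ≠ a := by
          intro h
          rw [hs2, h, Fin.lt_def] at h1; omega
        have ht2 : st.2 ≠ a' := by
          intro h; rw [hs2, h] at h1; exact lt_irrefl _ h1
        rw [hs2, Equiv.swap_apply_right, Equiv.swap_apply_of_ne_of_ne ht1 ht2] at h2
        rw [hs2, Fin.lt_def] at h1
        rw [Fin.lt_def] at h2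
        omega
      · exfalso
        rw [Equiv.swap_apply_of_ne_of_ne hs1 hs2] at h2
        by_cases ht1 : st.2 = a
        · rw [ht1, Equiv.swap_apply_left] at h2
          rw [ht1, Fin.lt_def] at h1
          rw [Fin.lt_def] at h2
          have := Fin.val_ne_of_ne hs1
          omega
        · by_cases ht2 : st.2 = a'
          · rw [ht2, Equiv.swap_apply_right] at h2
            rw [ht2, Fin.lt_def] at h1
            rw [Fin.lt_def] at h2
            have := Fin.val_ne_of_ne hs1
            omega
          · rw [Equiv.swap_apply_of_ne_of_ne ht1 ht2] at h2
            exact absurd h1 h2.asymm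
  · rintro ⟨h1, h2⟩
    refine ⟨?_, ?_⟩ <;>
      simp [h1, h2, Equiv.swap_apply_left, Equiv.swap_apply_right, Fin.lt_def, haa]

lemma manC_swap {n k : ℕ} (q : Matrix (Fin n) (Fin n) ℂ) (a a' : Fin k)
    (ha : (a:ℕ) + 1 = (a':ℕ)) (b : Fin k → Fin n) :
    manC q (Equiv.swap a a') b = q (b a) (b a') := by
  rw [manC, swap_filter a a' ha, Finset.prod_singleton]

lemma ofFn_prod_split {R : Type*} [Ring R] {k : ℕ} (a : ℕ) (h : a + 1 < k)
    (F : Fin k → R) :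
    (List.ofFn F).prod = ((List.ofFn F).take a).prod *
      (F ⟨a, by omega⟩ * (F ⟨a + 1, h⟩ * ((List.ofFn F).drop (a + 2)).prod)) := by
  conv_lhs => rw [← List.take_append_drop a (List.ofFn F)]
  rw [List.prod_append]
  congr 1
  rw [List.drop_eq_getElem_cons (by simp [List.length_ofFn]; omega),
    List.prod_cons]
  congr 1
  · simp [List.getElem_ofFn]
  rw [show a + 1 + 1 = a + 2 from rfl] at *
  rw [List.drop_eq_getElem_cons (by simp [List.length_ofFn]; omega), List.prod_cons]
  congr 2
  · simp [List.getElem_ofFn]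

lemma ofFn_take_congr {α : Type*} {k : ℕ} (a : ℕ) (F G : Fin k → α)
    (h : ∀ i : Fin k, (i : ℕ) < a → F i = G i) :
    (List.ofFn F).take a = (List.ofFn G).take a := by
  apply List.ext_getElem
  · simp
  · intro i h1 h2
    simp only [List.getElem_take, List.getElem_ofFn]
    simp only [List.length_take, List.length_ofFn, lt_min_iff] at h1
    exact h ⟨i, h1.2⟩ h1.1

lemma ofFn_drop_congr {α : Type*} {k : ℕ} (a : ℕ) (F G : Fin k → α)
    (h : ∀ i : Fin k, a ≤ (i : ℕ) → F i = G i) :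
    (List.ofFn F).drop a = (List.ofFn G).drop a := by
  apply List.ext_getElem
  · simp
  · intro i h1 h2
    simp only [List.getElem_drop, List.getElem_ofFn]
    exact h _ (by simp)

section ManinCore

variable {R : Type*} [Ring R] [Algebra ℂ R] {n m : ℕ}
  {q : Matrix (Fin n) (Fin n) ℂ} {p : Matrix (Fin m) (Fin m) ℂ}
  {M : Matrix (Fin n) (Fin m) R}

lemma manin_lt_lt (hM : IsManin q p M)
    {i j : Fin n} (hij : i < j) {k l : Fin m} (hkl : k < l) :
    M i k * M j l + p k l • (M i l * M j k)
      = q j i • (M j k * M i l) + (q j i * p k l) • (M j l * M i k) := by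
  have h := hM.2 i j k l hij hkl
  refine sub_eq_zero.mp ?_
  rw [← h]; abel

lemma manin_lt (hp : IsParametric p) (hM : IsManin q p M)
    {i j : Fin n} (hij : i < j) (k l : Fin m) :
    M i k * M j l + p k l • (M i l * M j k)
      = q j i • (M j k * M i l) + (q j i * p k l) • (M j l * M i k) := by
  rcases lt_trichotomy k l with hkl | rfl | hkl
  · exact manin_lt_lt hM hij hkl
  · rw [hp.2.2 k, one_smul, mul_one, hM.1 i j k hij]
  · have h := manin_lt_lt hM hij hkl
    have h2 := congrArg (fun z => p k l • z) h
    simp only [smul_add, smul_smul] at h2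
    have e1 : p k l * p l k = 1 := hp.2.1 k l
    have e2 : p k l * (q j i * p l k) = q j i := by
      rw [mul_comm (q j i), ← mul_assoc, e1, one_mul]
    have e3 : p k l * q j i = q j i * p k l := mul_comm _ _
    rw [e1, e2, e3, one_smul] at h2
    exact (add_comm _ _).trans (h2.trans (add_comm _ _))

lemma manin_all (hq : IsParametric q) (hp : IsParametric p) (hM : IsManin q p M)
    (i j : Fin n) (k l : Fin m) :
    M i k * M j l + p k l • (M i l * M j k)
      = q j i • (M j k * M i l) + (q j i * p k l) • (M j l * M i k) := by
  rcases lt_trichotomy i j with hij | rfl | hij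
  · exact manin_lt hp hM hij k l
  · rw [hq.2.2 i, one_smul, one_mul]
  · have h := manin_lt hp hM hij k l
    have h2 := congrArg (fun z => q j i • z) h
    simp only [smul_add, smul_smul] at h2
    have e1 : q j i * q i j = 1 := hq.2.1 j i
    have e2 : q j i * (q i j * p k l) = p k l := by rw [← mul_assoc, e1, one_mul]
    rw [e1, e2, one_smul] at h2
    exact h2.symm

end ManinCore

section ManinLocal

variable {R : Type*} [Ring R] [Algebra ℂ R] {n m : ℕ}
  {q : Matrix (Fin n) (Fin n) ℂ} {p : Matrix (Fin m) (Fin m) ℂ}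
  {M : Matrix (Fin n) (Fin m) R}

lemma manin_local_entry (hq : IsParametric q) (hp : IsParametric p) (hM : IsManin q p M)
    {k : ℕ} (a a' : Fin k) (ha : (a : ℕ) + 1 = (a' : ℕ))
    (A : Fin k → Fin n) (B : Fin k → Fin m) :
    (List.ofFn fun i => M (A i) (B i)).prod
        + p (B a) (B a') • (List.ofFn fun i => M (A i) (B (Equiv.swap a a' i))).prod
      = q (A a') (A a) • (List.ofFn fun i => M (A (Equiv.swap a a' i)) (B i)).prod
        + (q (A a') (A a) * p (B a) (B a')) •
            (List.ofFn fun i => M (A (Equiv.swap a a' i)) (B (Equiv.swap a a' i))).prod := by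
  set τ := Equiv.swap a a' with hτ
  have hak : (a : ℕ) + 1 < k := ha ▸ a'.isLt
  have hmka : (⟨(a : ℕ), by omega⟩ : Fin k) = a := Fin.eta a _
  have hmka' : (⟨(a : ℕ) + 1, hak⟩ : Fin k) = a' := by
    rw [Fin.ext_iff]; exact ha
  have hτa : τ a = a' := Equiv.swap_apply_left _ _
  have hτa' : τ a' = a := Equiv.swap_apply_right _ _
  have hτo : ∀ i : Fin k, i ≠ a → i ≠ a' → τ i = i := fun i h1 h2 =>
    Equiv.swap_apply_of_ne_of_ne h1 h2
  have hne_lt : ∀ i : Fin k, (i : ℕ) < (a : ℕ) → τ i = i := by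
    intro i hi
    exact hτo i (Fin.ne_of_val_ne (by omega)) (Fin.ne_of_val_ne (by omega))
  have hne_gt : ∀ i : Fin k, (a : ℕ) + 2 ≤ (i : ℕ) → τ i = i := by
    intro i hi
    exact hτo i (Fin.ne_of_val_ne (by omega)) (Fin.ne_of_val_ne (by omega))
  rw [ofFn_prod_split (a : ℕ) hak (fun i => M (A i) (B i)),
    ofFn_prod_split (a : ℕ) hak (fun i => M (A i) (B (τ i))),
    ofFn_prod_split (a : ℕ) hak (fun i => M (A (τ i)) (B i)),
    ofFn_prod_split (a : ℕ) hak (fun i => M (A (τ i)) (B (τ i)))]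
  rw [ofFn_take_congr (a : ℕ) (fun i => M (A i) (B (τ i))) (fun i => M (A i) (B i))
      (fun i hi => by simp only [hne_lt i hi]),
    ofFn_take_congr (a : ℕ) (fun i => M (A (τ i)) (B i)) (fun i => M (A i) (B i))
      (fun i hi => by simp only [hne_lt i hi]),
    ofFn_take_congr (a : ℕ) (fun i => M (A (τ i)) (B (τ i))) (fun i => M (A i) (B i))
      (fun i hi => by simp only [hne_lt i hi]),
    ofFn_drop_congr ((a : ℕ) + 2) (fun i => M (A i) (B (τ i))) (fun i => M (A i) (B i))
      (fun i hi => by simp only [hne_gt i hi]),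
    ofFn_drop_congr ((a : ℕ) + 2) (fun i => M (A (τ i)) (B i)) (fun i => M (A i) (B i))
      (fun i hi => by simp only [hne_gt i hi]),
    ofFn_drop_congr ((a : ℕ) + 2) (fun i => M (A (τ i)) (B (τ i))) (fun i => M (A i) (B i))
      (fun i hi => by simp only [hne_gt i hi])]
  simp only [hmka, hmka', hτa, hτa']
  set L := ((List.ofFn fun i => M (A i) (B i)).take (a : ℕ)).prod with hL
  set D := ((List.ofFn fun i => M (A i) (B i)).drop ((a : ℕ) + 2)).prod with hD
  have h2 := congrArg (fun z => L * z * D)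
    (manin_all hq hp hM (A a) (A a') (B a) (B a'))
  simp only [mul_add, add_mul, mul_smul_comm, smul_mul_assoc, mul_assoc] at h2
  simpa only [mul_assoc] using h2

end ManinLocal

section SwapMul

variable {R : Type*} [Ring R] [Algebra ℂ R] {n m k : ℕ}

lemma mul_permMat_swap {ι : Type*} [Fintype ι] [DecidableEq ι]
    (p : Matrix (Fin m) (Fin m) ℂ) (a a' : Fin k) (ha : (a:ℕ) + 1 = (a':ℕ))
    (N : Matrix ι (Fin k → Fin m) R) :
    N * (permMat p (Equiv.swap a a')).map (algebraMap ℂ R)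
      = Matrix.of fun A B => p (B a) (B a') • N A (fun i => B (Equiv.swap a a' i)) := by
  ext A B
  rw [Matrix.mul_apply]
  rw [Finset.sum_eq_single (fun i => B (Equiv.swap a a' i))]
  · rw [Matrix.map_apply, permMat_apply, if_pos (by ext x; simp [Equiv.swap_inv]),
      manC_swap p a a' ha, Matrix.of_apply, Algebra.smul_def, ← Algebra.commutes]
  · intro c _ hc
    rw [Matrix.map_apply, permMat_apply, if_neg, map_zero, mul_zero]
    intro h
    exact hc (by rw [h]; ext x; simp [Equiv.swap_inv])
  · simp

lemma permMat_swap_mul {ι : Type*} [Fintype ι] [DecidableEq ι]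
    (q : Matrix (Fin n) (Fin n) ℂ) (a a' : Fin k) (ha : (a:ℕ) + 1 = (a':ℕ))
    (N : Matrix (Fin k → Fin n) ι R) :
    (permMat q (Equiv.swap a a')).map (algebraMap ℂ R) * N
      = Matrix.of fun A B => q (A a') (A a) • N (fun i => A (Equiv.swap a a' i)) B := by
  ext A B
  rw [Matrix.mul_apply]
  have hiff : ∀ C : Fin k → Fin n,
      (A = C ∘ ⇑(Equiv.swap a a')⁻¹) ↔ C = fun i => A (Equiv.swap a a' i) := by
    intro C
    rw [Equiv.swap_inv]
    constructor
    · rintro rfl; ext x; simp [Function.comp, Equiv.swap_apply_self]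
    · rintro rfl; ext x; simp [Function.comp, Equiv.swap_apply_self]
  rw [Finset.sum_eq_single (fun i => A (Equiv.swap a a' i))]
  · rw [Matrix.map_apply, permMat_apply, if_pos ((hiff _).mpr rfl),
      manC_swap q a a' ha, Matrix.of_apply]
    have h1 : A (Equiv.swap a a' a) = A a' := by rw [Equiv.swap_apply_left]
    have h2 : A (Equiv.swap a a' a') = A a := by rw [Equiv.swap_apply_right]
    rw [h1, h2, Algebra.smul_def]
  · intro c _ hc
    rw [Matrix.map_apply, permMat_apply, if_neg, map_zero, zero_mul]
    exact fun h => hc ((hiff c).mp h)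
  · simp

lemma manin_local_mat {q : Matrix (Fin n) (Fin n) ℂ} {p : Matrix (Fin m) (Fin m) ℂ}
    {M : Matrix (Fin n) (Fin m) R}
    (hq : IsParametric q) (hp : IsParametric p) (hM : IsManin q p M)
    (a a' : Fin k) (ha : (a:ℕ) + 1 = (a':ℕ)) :
    tensorPow M k + tensorPow M k * (permMat p (Equiv.swap a a')).map (algebraMap ℂ R)
      = (permMat q (Equiv.swap a a')).map (algebraMap ℂ R) * tensorPow M k
        + (permMat q (Equiv.swap a a')).map (algebraMap ℂ R) * tensorPow M k *
            (permMat p (Equiv.swap a a')).map (algebraMap ℂ R) := by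
  rw [mul_permMat_swap p a a' ha, permMat_swap_mul q a a' ha,
    mul_permMat_swap p a a' ha]
  ext A B
  simp only [Matrix.add_apply, Matrix.of_apply, tensorPow, smul_smul,
    mul_comm (p (B a) (B a'))]
  exact manin_local_entry hq hp hM a a' ha A B

end SwapMul

section Absorb

variable {n m k : ℕ}

local notation "sgn" σ => ((Equiv.Perm.sign σ : ℤ) : ℂ)

lemma sgn_mul_self (σ : Equiv.Perm (Fin k)) :
    ((Equiv.Perm.sign σ : ℤ) : ℂ) * ((Equiv.Perm.sign σ : ℤ) : ℂ) = 1 := by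
  rcases Int.units_eq_one_or (Equiv.Perm.sign σ) with h | h <;> rw [h] <;> norm_num

lemma manAsym_mul_permMat {q : Matrix (Fin n) (Fin n) ℂ} (hq : ∀ i j, q i j * q j i = 1)
    (σ : Equiv.Perm (Fin k)) :
    manAsym n k q * permMat q σ
      = ((Equiv.Perm.sign σ : ℤ) : ℂ) • manAsym n k q := by
  unfold manAsym
  rw [Matrix.smul_mul, Finset.sum_mul]
  rw [smul_comm (((Equiv.Perm.sign σ : ℤ) : ℂ)) (((k.factorial : ℂ))⁻¹)]
  congr 1
  rw [Finset.smul_sum]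
  simp only [Matrix.smul_mul, ← permMat_mul hq, smul_smul]
  exact Fintype.sum_bijective (· * σ) (Group.mulRight_bijective σ) _ _ (fun ρ => by
    congr 1
    simp only [map_mul, Units.val_mul, Int.cast_mul]
    rw [← mul_assoc, mul_comm ((Equiv.Perm.sign σ : ℤ) : ℂ), mul_assoc, sgn_mul_self,
      mul_one])

lemma permMat_mul_manSym {p : Matrix (Fin m) (Fin m) ℂ} (hp : ∀ i j, p i j * p j i = 1)
    (σ : Equiv.Perm (Fin k)) :
    permMat p σ * manSym m k p = manSym m k p := by
  unfold manSym
  rw [Matrix.mul_smul, Finset.mul_sum]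
  congr 1
  simp only [← permMat_mul hp]
  exact Fintype.sum_bijective (σ * ·) (Group.mulLeft_bijective σ) _ _ (fun ρ => rfl)

lemma matrix_map_sum {R : Type*} [Ring R] [Algebra ℂ R] {ι α β : Type*} [Fintype ι]
    (f : ι → Matrix α β ℂ) :
    (∑ i, f i).map (algebraMap ℂ R) = ∑ i, (f i).map (algebraMap ℂ R) := by
  ext A B
  simp [Matrix.map_apply, Matrix.sum_apply]

lemma matrix_map_smul {R : Type*} [Ring R] [Algebra ℂ R] {α β : Type*}
    (c : ℂ) (N : Matrix α β ℂ) :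
    (c • N).map (algebraMap ℂ R) = c • N.map (algebraMap ℂ R) := by
  ext A B
  simp [Matrix.map_apply, Algebra.smul_def]

end Absorb

lemma half_cancel {R : Type*} [Ring R] [Algebra ℂ R] {α β : Type*}
    (x : Matrix α β R) (h : x + x = 0) : x = 0 := by
  have h2 : (2 : ℂ) • x = 0 := by rw [two_smul]; exact h
  calc x = ((2 : ℂ)⁻¹ * 2) • x := by norm_num
    _ = (2 : ℂ)⁻¹ • ((2 : ℂ) • x) := mul_smul _ _ _
    _ = 0 := by rw [h2, smul_zero]

/-- For an `n×m` `(q̂,p̂)`-Manin matrix `M` and every `k ≥ 1`: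
`A_{q̂}^{(k)} M_1⋯M_k = A_{q̂}^{(k)} M_1⋯M_k A_{p̂}^{(k)}` and
`M_1⋯M_k S_{p̂}^{(k)} = S_{q̂}^{(k)} M_1⋯M_k S_{p̂}^{(k)}`. -/
theorem manin_antisymmetrizer_symmetrizer {R : Type*} [Ring R] [Algebra ℂ R] {n m : ℕ}
    (q : Matrix (Fin n) (Fin n) ℂ) (p : Matrix (Fin m) (Fin m) ℂ)
    (hq : IsParametric q) (hp : IsParametric p)
    (M : Matrix (Fin n) (Fin m) R) (hM : IsManin q p M) (k : ℕ) (hk : 1 ≤ k) :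
    (manAsym n k q).map (algebraMap ℂ R) * tensorPow M k
        = (manAsym n k q).map (algebraMap ℂ R) * tensorPow M k *
            (manAsym m k p).map (algebraMap ℂ R) ∧
    tensorPow M k * (manSym m k p).map (algebraMap ℂ R)
        = (manSym n k q).map (algebraMap ℂ R) * tensorPow M k *
            (manSym m k p).map (algebraMap ℂ R) := by
  obtain ⟨k', rfl⟩ : ∃ k', k = k' + 1 := ⟨k - 1, by omega⟩
  clear hk
  set T := tensorPow M (k' + 1) with hT
  set AQ := (manAsym n (k' + 1) q).map (algebraMap ℂ R) with hAQ
  set SP := (manSym m (k' + 1) p).map (algebraMap ℂ R) with hSP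
  have hgen : ∀ σ : Equiv.Perm (Fin (k' + 1)),
      σ ∈ Submonoid.closure
        (Set.range fun i : Fin k' => Equiv.swap (Fin.castSucc i) (Fin.succ i)) := by
    intro σ
    rw [Equiv.Perm.mclosure_swap_castSucc_succ]
    trivial
  have hadj : ∀ i : Fin k',
      ((Fin.castSucc i : Fin (k' + 1)) : ℕ) + 1 = ((Fin.succ i : Fin (k' + 1)) : ℕ) := by
    intro i; simp
  have hne : ∀ i : Fin k', (Fin.castSucc i : Fin (k' + 1)) ≠ Fin.succ i := by
    intro i; exact Fin.ne_of_val_ne (by simp)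
  -- Claim 1
  have claim1 : ∀ σ : Equiv.Perm (Fin (k' + 1)),
      AQ * T * (permMat p σ).map (algebraMap ℂ R)
        = ((Equiv.Perm.sign σ : ℤ) : ℂ) • (AQ * T) := by
    intro σ
    induction hgen σ using Submonoid.closure_induction with
    | mem x hx =>
      obtain ⟨i, rfl⟩ := hx
      set PQ := (permMat q (Equiv.swap (Fin.castSucc i) (Fin.succ i))).map
        (algebraMap ℂ R) with hPQ
      set PP := (permMat p (Equiv.swap (Fin.castSucc i) (Fin.succ i))).map
        (algebraMap ℂ R) with hPP
      have hloc : T + T * PP = PQ * T + PQ * T * PP :=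
        manin_local_mat (k := k' + 1) hq hp hM _ _ (hadj i)
      have habs : AQ * PQ = -AQ := by
        have h1 := manAsym_mul_permMat (n := n) (k := k' + 1) hq.2.1
          (Equiv.swap (Fin.castSucc i) (Fin.succ i))
        rw [Equiv.Perm.sign_swap (hne i)] at h1
        have h2 := congrArg (fun N => Matrix.map N (algebraMap ℂ R)) h1
        simp only [Matrix.map_mul, matrix_map_smul] at h2
        rw [hAQ, hPQ, h2]
        norm_num
      have h3 : AQ * T + AQ * T * PP = -(AQ * T) + -(AQ * T * PP) := by
        calc AQ * T + AQ * T * PP = AQ * (T + T * PP) := by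
              rw [Matrix.mul_add, Matrix.mul_assoc]
          _ = AQ * (PQ * T + PQ * T * PP) := by rw [hloc]
          _ = AQ * (PQ * T) + AQ * (PQ * T * PP) := by rw [Matrix.mul_add]
          _ = -(AQ * T) + -(AQ * T * PP) := by
              rw [← Matrix.mul_assoc, habs, Matrix.mul_assoc PQ T PP,
                ← Matrix.mul_assoc AQ PQ (T * PP), habs]
              simp only [Matrix.neg_mul, Matrix.mul_assoc]
      have h4 : (AQ * T + AQ * T * PP) + (AQ * T + AQ * T * PP) = 0 := by
        nth_rewrite 2 [h3]
        abel
      have h5 := half_cancel _ h4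
      have h6 : AQ * T * PP = -(AQ * T) := by
        have h7 : AQ * T * PP + AQ * T = 0 := by rw [add_comm (AQ * T * PP) (AQ * T)]; exact h5
        calc AQ * T * PP = AQ * T * PP + (AQ * T + -(AQ * T)) := by
              rw [add_neg_cancel, add_zero]
          _ = (AQ * T * PP + AQ * T) + -(AQ * T) := by rw [add_assoc]
          _ = -(AQ * T) := by rw [h7, zero_add]
      rw [h6, Equiv.Perm.sign_swap (hne i)]
      norm_num
    | one =>
      rw [permMat_one, Matrix.map_one (algebraMap ℂ R) (map_zero _) (map_one _)]
      simp
    | mul σ τ hσc hτc ihσ ihτ =>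
      rw [permMat_mul hp.2.1, Matrix.map_mul, ← Matrix.mul_assoc, ihσ,
        Matrix.smul_mul, ihτ, smul_smul]
      congr 1
      rw [map_mul]
      push_cast
      ring
  -- Claim 2
  have claim2 : ∀ σ : Equiv.Perm (Fin (k' + 1)),
      (permMat q σ).map (algebraMap ℂ R) * (T * SP) = T * SP := by
    intro σ
    induction hgen σ using Submonoid.closure_induction with
    | mem x hx =>
      obtain ⟨i, rfl⟩ := hx
      set PQ := (permMat q (Equiv.swap (Fin.castSucc i) (Fin.succ i))).map
        (algebraMap ℂ R) with hPQ
      set PP := (permMat p (Equiv.swap (Fin.castSucc i) (Fin.succ i))).map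
        (algebraMap ℂ R) with hPP
      have hloc : T + T * PP = PQ * T + PQ * T * PP :=
        manin_local_mat (k := k' + 1) hq hp hM _ _ (hadj i)
      have habs : PP * SP = SP := by
        have h1 := permMat_mul_manSym (m := m) (k := k' + 1) hp.2.1
          (Equiv.swap (Fin.castSucc i) (Fin.succ i))
        have h2 := congrArg (fun N => Matrix.map N (algebraMap ℂ R)) h1
        simp only [Matrix.map_mul] at h2
        rw [hSP, hPP, h2]
      have h3 : T * SP + T * SP = PQ * (T * SP) + PQ * (T * SP) := by
        calc T * SP + T * SP
            = (T + T * PP) * SP := by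
              rw [Matrix.add_mul, Matrix.mul_assoc, habs]
          _ = (PQ * T + PQ * T * PP) * SP := by rw [hloc]
          _ = PQ * (T * SP) + PQ * (T * SP) := by
              rw [Matrix.add_mul, Matrix.mul_assoc PQ T SP,
                Matrix.mul_assoc (PQ * T) PP SP, habs, Matrix.mul_assoc PQ T SP]
      have h4 : (T * SP - PQ * (T * SP)) + (T * SP - PQ * (T * SP)) = 0 := by
        rw [sub_add_sub_comm, sub_eq_zero, h3]
      have h5 := half_cancel _ h4
      rw [sub_eq_zero] at h5
      exact h5.symm
    | one =>
      rw [permMat_one, Matrix.map_one (algebraMap ℂ R) (map_zero _) (map_one _)]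
      simp
    | mul σ τ hσc hτc ihσ ihτ =>
      rw [permMat_mul hq.2.1, Matrix.map_mul, Matrix.mul_assoc, ihτ, ihσ]
  -- factorial facts
  have hfact : (((k' + 1).factorial : ℂ))⁻¹ * ((k' + 1).factorial : ℂ) = 1 :=
    inv_mul_cancel₀ (Nat.cast_ne_zero.mpr (Nat.factorial_ne_zero _))
  have hcard : (Finset.univ : Finset (Equiv.Perm (Fin (k' + 1)))).card
      = (k' + 1).factorial := by
    rw [Finset.card_univ, Fintype.card_perm, Fintype.card_fin]
  constructor
  · have hAP : (manAsym m (k' + 1) p).map (algebraMap ℂ R)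
        = (((k' + 1).factorial : ℂ))⁻¹ •
            ∑ σ : Equiv.Perm (Fin (k' + 1)), ((Equiv.Perm.sign σ : ℤ) : ℂ) •
              (permMat p σ).map (algebraMap ℂ R) := by
      unfold manAsym
      rw [matrix_map_smul, matrix_map_sum]
      congr 1
      refine Finset.sum_congr rfl fun σ _ => ?_
      rw [matrix_map_smul]
    have hterm : ∀ σ : Equiv.Perm (Fin (k' + 1)),
        AQ * T * (((Equiv.Perm.sign σ : ℤ) : ℂ) •
          (permMat p σ).map (algebraMap ℂ R)) = AQ * T := by
      intro σ
      rw [Matrix.mul_smul, claim1 σ, smul_smul, sgn_mul_self, one_smul]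
    rw [hAP, Matrix.mul_smul, Matrix.mul_sum,
      Finset.sum_congr rfl fun σ _ => hterm σ, Finset.sum_const, hcard,
      ← Nat.cast_smul_eq_nsmul ℂ, smul_smul, hfact, one_smul]
  · have hSQ : (manSym n (k' + 1) q).map (algebraMap ℂ R)
        = (((k' + 1).factorial : ℂ))⁻¹ •
            ∑ σ : Equiv.Perm (Fin (k' + 1)), (permMat q σ).map (algebraMap ℂ R) := by
      unfold manSym
      rw [matrix_map_smul, matrix_map_sum]
    rw [Matrix.mul_assoc, hSQ, Matrix.smul_mul, Matrix.sum_mul,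
      Finset.sum_congr rfl fun σ _ => claim2 σ, Finset.sum_const, hcard,
      ← Nat.cast_smul_eq_nsmul ℂ, smul_smul, hfact, one_smul]
end
end
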